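/- arXiv:1507.06749 — 4 statements merged into one kernel-verified Lean document; each statement's English description precedes it below -/
import Mathlib

section
/- A finite simple graph G is word-representable if and only if G admits a semi-transitive orientation. -/
/-- Two letters `x ≠ y` alternate in the word `w` if, after deleting all other letters,
consecutive letters are always distinct (i.e. the result is `xyxy...` or `yxyx...`). -/
def Alternate {V : Type*} [DecidableEq V] (w : List V) (x y : V) : Prop :=
  (w.filter (fun z => z = x ∨ z = y)).Chain' (· ≠ ·)

/-- A graph is word-representable if some word over its vertex alphabet, containing every
vertex, is such that two distinct letters alternate iff they are adjacent. -/
def WordRepresentable {V : Type*} [DecidableEq V] (G : SimpleGraph V) : Prop :=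
  ∃ w : List V, (∀ v : V, v ∈ w) ∧ ∀ x y : V, x ≠ y → (Alternate w x y ↔ G.Adj x y)

/-- `D` is an orientation of `G`: each edge gets exactly one direction. -/
def IsOrientation {V : Type*} (G : SimpleGraph V) (D : V → V → Prop) : Prop :=
  (∀ x y, D x y → ¬ D y x) ∧ (∀ x y, G.Adj x y ↔ (D x y ∨ D y x))

/-- A digraph is acyclic: no directed cycle. -/
def DigraphAcyclic {V : Type*} (D : V → V → Prop) : Prop :=
  ∀ v, ¬ Relation.TransGen D v v

/-- For every directed path `v 0 → v 1 → ... → v k`, if the arc `v 0 → v k` is present then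
all arcs `v i → v j` for `i < j` are present. -/
def ShortcutFree {V : Type*} (D : V → V → Prop) : Prop :=
  ∀ (k : ℕ) (v : Fin (k + 1) → V),
    (∀ i : Fin k, D (v i.castSucc) (v i.succ)) →
    D (v 0) (v (Fin.last k)) →
    ∀ i j : Fin (k + 1), i < j → D (v i) (v j)

/-- A semi-transitive orientation is acyclic and shortcut-free. -/
def SemiTransitive {V : Type*} (D : V → V → Prop) : Prop :=
  DigraphAcyclic D ∧ ShortcutFree D


open List

section Stage1
variable {V : Type*} [DecidableEq V]


variable {V : Type*} [DecidableEq V]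

/-- `x` weakly leads `y` in `w`. -/
def Leads (w : List V) (x y : V) : Prop :=
  ∀ n : ℕ, (w.take n).count y ≤ (w.take n).count x ∧
    (w.take n).count x ≤ (w.take n).count y + 1

/-- After an occurrence of `x`: `y` must catch up first. -/
def AfterX (w : List V) (x y : V) : Prop :=
  ∀ n : ℕ, (w.take n).count x ≤ (w.take n).count y ∧
    (w.take n).count y ≤ (w.take n).count x + 1


lemma count_take_cons_self {w : List V} {x : V} (n : ℕ) :
    ((x :: w).take (n+1)).count x = (w.take n).count x + 1 := by
  simp [take_succ_cons, count_cons]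

lemma count_take_cons_ne {w : List V} {x a : V} (h : a ≠ x) (n : ℕ) :
    ((a :: w).take (n+1)).count x = (w.take n).count x := by
  simp [take_succ_cons, count_cons, h]

lemma chainX_iff : ∀ (w : List V) (x y : V), x ≠ y →
    (List.Chain (· ≠ ·) x (w.filter (fun z => z = x ∨ z = y)) ↔ AfterX w x y) := by
  intro w
  induction w with
  | nil =>
    intro x y hxy
    simp only [filter_nil, List.Chain.nil, true_iff]
    intro n; simp
  | cons a w ih =>
    intro x y hxy
    by_cases hax : a = x
    · subst hax
      have hfil : (a :: w).filter (fun z => z = a ∨ z = y) =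
          a :: w.filter (fun z => z = a ∨ z = y) := by
        simp [filter_cons]
      rw [hfil, List.Chain, isChain_cons_cons]
      constructor
      · rintro ⟨h1, -⟩; exact absurd rfl h1
      · intro h
        have h1 := h 1
        rw [count_take_cons_self 0, count_take_cons_ne hxy 0] at h1
        simp at h1
    · by_cases hay : a = y
      · subst hay
        have hfil : (a :: w).filter (fun z => z = x ∨ z = a) =
            a :: w.filter (fun z => z = x ∨ z = a) := by
          simp [filter_cons]
        rw [hfil, List.Chain, isChain_cons_cons]
        have hcongr : w.filter (fun z => decide (z = x ∨ z = a)) =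
            w.filter (fun z => decide (z = a ∨ z = x)) := by
          apply filter_congr
          intro z _; simp [or_comm]
        have hx' : a ≠ x := hax
        constructor
        · rintro ⟨-, h2⟩
          rw [hcongr] at h2
          have h3 := (ih a x hx').1 h2
          intro n
          cases n with
          | zero => simp
          | succ m =>
            have hm := h3 m
            rw [count_take_cons_ne hax m, count_take_cons_self m]
            omega
        · intro h
          refine ⟨hxy, ?_⟩
          rw [hcongr]
          refine (ih a x hx').2 ?_
          intro m
          have hm := h (m+1)
          rw [count_take_cons_ne hax m, count_take_cons_self m] at hm
          omega
      · have hfil : (a :: w).filter (fun z => z = x ∨ z = y) =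
            w.filter (fun z => z = x ∨ z = y) := by
          simp [filter_cons, hax, hay]
        rw [hfil, ih x y hxy]
        constructor
        · intro h n
          cases n with
          | zero => simp
          | succ m =>
            have hm := h m
            rw [count_take_cons_ne hax m, count_take_cons_ne hay m]
            exact hm
        · intro h m
          have hm := h (m+1)
          rw [count_take_cons_ne hax m, count_take_cons_ne hay m] at hm
          exact hm

lemma alternate'_iff (w : List V) (x y : V) (hxy : x ≠ y) :
    Alternate w x y ↔ Leads w x y ∨ Leads w y x := by
  induction w with
  | nil =>
    simp only [Alternate, filter_nil]
    constructor
    · intro _; left; intro n; simp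
    · intro _; exact List.isChain_nil
  | cons a w ih =>
    by_cases hax : a = x
    · subst hax
      have hfil : (a :: w).filter (fun z => z = a ∨ z = y) =
          a :: w.filter (fun z => z = a ∨ z = y) := by
        simp [filter_cons]
      have hlhs : Alternate (a :: w) a y ↔ AfterX w a y := by
        unfold Alternate
        rw [hfil]
        show List.Chain _ a _ ↔ _
        exact chainX_iff w a y hxy
      rw [hlhs]
      constructor
      · intro h
        left
        intro n
        cases n with
        | zero => simp
        | succ m =>
          have hm := h m
          rw [count_take_cons_ne hxy m, count_take_cons_self m]
          omega
      · intro h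
        rcases h with h | h
        · intro n
          have hm := h (n+1)
          rw [count_take_cons_ne hxy n, count_take_cons_self n] at hm
          omega
        · exfalso
          have h1 := h 1
          rw [count_take_cons_ne hxy 0, count_take_cons_self 0] at h1
          simp at h1
    · by_cases hay : a = y
      · subst hay
        have hcongr : (a :: w).filter (fun z => decide (z = x ∨ z = a)) =
            (a :: w).filter (fun z => decide (z = a ∨ z = x)) := by
          apply filter_congr
          intro z _; simp [or_comm]
        have hx' : a ≠ x := hax
        have hfil : (a :: w).filter (fun z => z = a ∨ z = x) =
            a :: w.filter (fun z => z = a ∨ z = x) := by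
          simp [filter_cons]
        have hlhs : Alternate (a :: w) x a ↔ AfterX w a x := by
          unfold Alternate
          rw [hcongr, hfil]
          show List.Chain _ a _ ↔ _
          exact chainX_iff w a x hx'
        rw [hlhs]
        constructor
        · intro h
          right
          intro n
          cases n with
          | zero => simp
          | succ m =>
            have hm := h m
            rw [count_take_cons_ne hax m, count_take_cons_self m]
            omega
        · intro h
          rcases h with h | h
          · exfalso
            have h1 := h 1
            rw [count_take_cons_ne hax 0, count_take_cons_self 0] at h1
            simp at h1
          · intro n
            have hm := h (n+1)
            rw [count_take_cons_ne hax n, count_take_cons_self n] at hm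
            omega
      · have hfil : (a :: w).filter (fun z => z = x ∨ z = y) =
            w.filter (fun z => z = x ∨ z = y) := by
          simp [filter_cons, hax, hay]
        have hlhs : Alternate (a :: w) x y ↔ Alternate w x y := by
          unfold Alternate; rw [hfil]
        rw [hlhs, ih]
        have key : ∀ u v : V, u ≠ a → v ≠ a → (Leads (a :: w) u v ↔ Leads w u v) := by
          intro u v hu hv
          constructor
          · intro h m
            have hm := h (m+1)
            rw [count_take_cons_ne (fun h' => hu h'.symm) m,
              count_take_cons_ne (fun h' => hv h'.symm) m] at hm
            exact hm
          · intro h n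
            cases n with
            | zero => simp
            | succ m =>
              have hm := h m
              rw [count_take_cons_ne (fun h' => hu h'.symm) m,
                count_take_cons_ne (fun h' => hv h'.symm) m]
              exact hm
        rw [key x y (fun h => hax h.symm) (fun h => hay h.symm),
          key y x (fun h => hay h.symm) (fun h => hax h.symm)]

end Stage1

section Stage2
variable {V : Type*} [DecidableEq V]
lemma exists_count_lt : ∀ (w : List V) (x y : V), x ∈ w → x ≠ y → Leads w x y →
    ∃ n, (w.take n).count y < (w.take n).count x := by
  intro w
  induction w with
  | nil => intro x y hx; simp at hx
  | cons a w ih =>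
    intro x y hx hxy hL
    by_cases hax : a = x
    · subst hax
      refine ⟨1, ?_⟩
      rw [count_take_cons_self 0, count_take_cons_ne hxy 0]
      simp
    · by_cases hay : a = y
      · subst hay
        exfalso
        have h1 := (hL 1).1
        rw [count_take_cons_self 0, count_take_cons_ne hax 0] at h1
        simp at h1
      · have hx' : x ∈ w := by
          rcases mem_cons.1 hx with h | h
          · exact absurd h.symm hax
          · exact h
        have hL' : Leads w x y := by
          intro n
          have := hL (n+1)
          rwa [count_take_cons_ne hax n, count_take_cons_ne hay n] at this
        obtain ⟨n, hn⟩ := ih x y hx' hxy hL'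
        refine ⟨n+1, ?_⟩
        rwa [count_take_cons_ne hax n, count_take_cons_ne hay n]

theorem forward_dir {G : SimpleGraph V} {w : List V} (hall : ∀ v : V, v ∈ w)
    (hrep : ∀ x y : V, x ≠ y → (Alternate w x y ↔ G.Adj x y)) :
    ∃ D : V → V → Prop, IsOrientation G D ∧ SemiTransitive D := by
  classical
  set D : V → V → Prop := fun x y => G.Adj x y ∧ Leads w x y with hD
  have hasym : ∀ x y, D x y → ¬ D y x := by
    rintro x y ⟨hadj, hL⟩ ⟨_, hL'⟩
    obtain ⟨n, hn⟩ := exists_count_lt w x y (hall x) hadj.ne hL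
    exact absurd (hL' n).1 (by omega)
  have hor : ∀ x y, G.Adj x y ↔ D x y ∨ D y x := by
    intro x y
    constructor
    · intro h
      rcases (alternate'_iff w x y h.ne).1 ((hrep x y h.ne).2 h) with hL | hL
      · exact Or.inl ⟨h, hL⟩
      · exact Or.inr ⟨h.symm, hL⟩
    · rintro (⟨h, -⟩ | ⟨h, -⟩)
      · exact h
      · exact h.symm
  have hacyc : DigraphAcyclic D := by
    intro v hv
    set σ : V → V → Prop := fun x y =>
      (∀ n, (w.take n).count y ≤ (w.take n).count x) ∧
      ∃ n, (w.take n).count y < (w.take n).count x with hσ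
    have hσtrans : Transitive σ := by
      rintro a b c ⟨w1, -⟩ ⟨w2, m, s2⟩
      exact ⟨fun n => le_trans (w2 n) (w1 n), m, lt_of_lt_of_le s2 (w1 m)⟩
    have hsub : ∀ x y, D x y → σ x y := by
      rintro x y ⟨hadj, hL⟩
      exact ⟨fun n => (hL n).1, exists_count_lt w x y (hall x) hadj.ne hL⟩
    have hσvv : σ v v := by
      have := Relation.TransGen.mono (r := D) (fun x y h => hsub x y h) v v hv
      haveI hσT : IsTrans V σ := ⟨fun a b c => @hσtrans a b c⟩
      rwa [Relation.transGen_eq_self] at this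
    obtain ⟨-, n, hn⟩ := hσvv
    exact lt_irrefl _ hn
  refine ⟨D, ⟨hasym, hor⟩, hacyc, ?_⟩
  intro k v harc hlast i j hij
  have hstep : ∀ (a : ℕ) (h : a < k) (n : ℕ),
      (w.take n).count (v ⟨a+1, by omega⟩) ≤ (w.take n).count (v ⟨a, by omega⟩) ∧
      (w.take n).count (v ⟨a, by omega⟩) ≤ (w.take n).count (v ⟨a+1, by omega⟩) + 1 := by
    intro a h n
    have := (harc ⟨a, h⟩).2 n
    have e1 : (⟨a, h⟩ : Fin k).castSucc = (⟨a, by omega⟩ : Fin (k+1)) := rfl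
    have e2 : (⟨a, h⟩ : Fin k).succ = (⟨a+1, by omega⟩ : Fin (k+1)) := rfl
    rw [e1, e2] at this
    exact this
  have hmono : ∀ (d a : ℕ) (h : a + d ≤ k) (n : ℕ),
      (w.take n).count (v ⟨a+d, by omega⟩) ≤ (w.take n).count (v ⟨a, by omega⟩) := by
    intro d
    induction d with
    | zero => intro a h n; exact le_refl _
    | succ d ih =>
      intro a h n
      have h1 := ih a (by omega) n
      have h2 := (hstep (a+d) (by omega) n).1
      exact le_trans h2 h1
  have hij' : (i : ℕ) < (j : ℕ) := hij
  have veq : ∀ (a b : Fin (k+1)), (a : ℕ) = (b : ℕ) → v a = v b :=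
    fun a b h => congrArg v (Fin.ext h)
  have hLij : Leads w (v i) (v j) := by
    intro n
    have c0 := hmono ((j:ℕ) - (i:ℕ)) (i:ℕ) (by omega) n
    rw [veq ⟨(i:ℕ) + ((j:ℕ)-(i:ℕ)), by omega⟩ j (by simp only [Fin.val_mk]; omega),
        veq ⟨(i:ℕ), by omega⟩ i (by simp only [Fin.val_mk])] at c0
    have c1 := hmono (i:ℕ) 0 (by omega) n
    rw [veq ⟨0 + (i:ℕ), by omega⟩ i (by simp only [Fin.val_mk]; omega),
        veq ⟨0, by omega⟩ 0 (by simp)] at c1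
    have c2 := hmono (k - (j:ℕ)) (j:ℕ) (by omega) n
    rw [veq ⟨(j:ℕ) + (k - (j:ℕ)), by omega⟩ (Fin.last k)
          (by simp only [Fin.val_mk, Fin.val_last]; omega),
        veq ⟨(j:ℕ), by omega⟩ j (by simp only [Fin.val_mk])] at c2
    have c3 := (hlast.2 n).2
    exact ⟨c0, by omega⟩
  have hTG : ∀ (d a : ℕ) (h : a + d ≤ k), 0 < d →
      Relation.TransGen D (v ⟨a, by omega⟩) (v ⟨a + d, by omega⟩) := by
    intro d
    induction d with
    | zero => intro a h h0; omega
    | succ d ih =>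
      intro a h _
      have harc' : D (v ⟨a + d, by omega⟩) (v ⟨a + d + 1, by omega⟩) := by
        have h2 := harc ⟨a + d, by omega⟩
        rw [veq ((⟨a + d, by omega⟩ : Fin k).castSucc) ⟨a + d, by omega⟩ (by simp),
            veq ((⟨a + d, by omega⟩ : Fin k).succ) ⟨a + d + 1, by omega⟩ (by simp)] at h2
        exact h2
      rcases Nat.eq_zero_or_pos d with hd | hd
      · subst hd
        exact Relation.TransGen.single harc'
      · exact Relation.TransGen.tail (ih a (by omega) hd) harc'
  have hne : v i ≠ v j := by
    intro heq
    have h1 := hTG ((j:ℕ) - (i:ℕ)) (i:ℕ) (by omega) (by omega)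
    rw [veq ⟨(i:ℕ), by omega⟩ i (by simp only [Fin.val_mk]),
        veq ⟨(i:ℕ) + ((j:ℕ)-(i:ℕ)), by omega⟩ j (by simp only [Fin.val_mk]; omega)] at h1
    rw [heq] at h1
    exact hacyc _ h1
  have hadj : G.Adj (v i) (v j) :=
    (hrep _ _ hne).1 ((alternate'_iff w _ _ hne).2 (Or.inl hLij))
  exact ⟨hadj, hLij⟩

end Stage2

section Stage3
variable {V : Type*} [DecidableEq V]
variable {V : Type*} [DecidableEq V]


section Topo
variable {R : V → V → Prop}

/-- topological sort of a finset wrt an acyclic relation. -/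
lemma exists_topo [Fintype V] (hR : ∀ v, ¬ Relation.TransGen R v v) (s : Finset V) :
    ∃ l : List V, l.Nodup ∧ (∀ v, v ∈ l ↔ v ∈ s) ∧
      l.Pairwise (fun a b => ¬ Relation.TransGen R b a) := by
  classical
  have hwf : WellFounded (Relation.TransGen R) := by
    have : IsTrans V (Relation.TransGen R) := ⟨fun a b c => Relation.TransGen.trans⟩
    have : IsIrrefl V (Relation.TransGen R) := ⟨fun v => hR v⟩
    exact Finite.wellFounded_of_trans_of_irrefl _
  induction s using Finset.strongInductionOn with
  | _ s ih =>
    rcases s.eq_empty_or_nonempty with rfl | hs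
    · exact ⟨[], by simp, by simp, by simp⟩
    · obtain ⟨m, hms, hmin⟩ := hwf.has_min ↑s hs
      obtain ⟨l, hnd, hmem, hpw⟩ := ih (s.erase m) (Finset.erase_ssubset hms)
      refine ⟨m :: l, ?_, ?_, ?_⟩
      · refine nodup_cons.2 ⟨fun hm => ?_, hnd⟩
        have := (hmem m).1 hm
        simp at this
      · intro v
        simp only [mem_cons, hmem, Finset.mem_erase]
        constructor
        · rintro (rfl | ⟨-, h⟩)
          · exact hms
          · exact h
        · intro hv
          by_cases hvm : v = m
          · exact Or.inl hvm
          · exact Or.inr ⟨hvm, hv⟩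
      · refine pairwise_cons.2 ⟨?_, hpw⟩
        intro b hb
        have hbs : b ∈ s := (Finset.mem_erase.1 ((hmem b).1 hb)).2
        exact hmin b hbs
end Topo

section AddPair
variable {D : V → V → Prop}

lemma addPair_acyclic (hac : DigraphAcyclic D) {p q : V} (hne : p ≠ q)
    (hnpq : ¬ Relation.TransGen D q p) :
    ∀ v, ¬ Relation.TransGen (fun a b => D a b ∨ (a = p ∧ b = q)) v v := by
  set R := fun a b => D a b ∨ (a = p ∧ b = q) with hRdef
  have decomp : ∀ a b, Relation.TransGen R a b →
      Relation.TransGen D a b ∨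
        (Relation.ReflTransGen D a p ∧ Relation.ReflTransGen D q b) := by
    intro a b h
    induction h with
    | single h =>
      rcases h with h | ⟨rfl, rfl⟩
      · exact Or.inl (Relation.TransGen.single h)
      · exact Or.inr ⟨Relation.ReflTransGen.refl, Relation.ReflTransGen.refl⟩
    | tail hab hbc ih =>
      rename_i b' c'
      rcases ih with ih | ⟨h1, h2⟩
      · rcases hbc with h | ⟨rfl, rfl⟩
        · exact Or.inl (Relation.TransGen.tail ih h)
        · exact Or.inr ⟨ih.to_reflTransGen, Relation.ReflTransGen.refl⟩
      · rcases hbc with h | ⟨rfl, rfl⟩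
        · exact Or.inr ⟨h1, Relation.ReflTransGen.tail h2 h⟩
        · exfalso
          rcases Relation.reflTransGen_iff_eq_or_transGen.1 h2 with h3 | h3
          · exact hne h3
          · exact hnpq h3
  intro v hv
  rcases decomp v v hv with h | ⟨h1, h2⟩
  · exact hac v h
  · have : Relation.ReflTransGen D q p := h2.trans h1
    rcases Relation.reflTransGen_iff_eq_or_transGen.1 this with h3 | h3
    · exact hne h3
    · exact hnpq h3
end AddPair

section Paths
variable {D : V → V → Prop}

lemma chain_append_chain {a : V} {l m : List V} (h1 : List.Chain D a l)
    (h2 : List.Chain D ((a :: l).getLast (cons_ne_nil a l)) m) :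
    List.Chain D a (l ++ m) := by
  induction l generalizing a with
  | nil => simpa using h2
  | cons b l ih =>
    rw [List.Chain, isChain_cons_cons] at h1
    rw [cons_append, List.Chain, isChain_cons_cons]
    refine ⟨h1.1, ih h1.2 ?_⟩
    have : (a :: b :: l).getLast (cons_ne_nil _ _) = (b :: l).getLast (cons_ne_nil _ _) :=
      List.getLast_cons (cons_ne_nil _ _)
    rwa [this] at h2

lemma shortcutFree_list (hsf : ShortcutFree D) (a : V) (l : List V)
    (hc : List.Chain D a l) (hne : l ≠ [])
    (hlast : D a (l.getLast hne)) (i j : ℕ) (hij : i < j) (hj : j < l.length + 1) :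
    D ((a :: l).get ⟨i, by simp; omega⟩) ((a :: l).get ⟨j, by simp; omega⟩) := by
  set k := l.length with hk
  have hk1 : 0 < k := length_pos_iff.2 hne
  set v : Fin (k + 1) → V := fun t => (a :: l).get ⟨t.1, by have := t.isLt; simp only [length_cons]; omega⟩ with hv
  have hchain : (∀ h : 0 < l.length, D a (l.get ⟨0, h⟩)) ∧
      ∀ (i : ℕ) (h : i < l.length - 1), D (l.get ⟨i, by omega⟩) (l.get ⟨i + 1, by omega⟩) := by
    have h0 := isChain_iff_getElem.1 (show IsChain D (a :: l) from hc)
    exact ⟨fun h => by simpa using h0 0 (by simp; omega),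
      fun i h => h0 (i + 1) (by simp; omega)⟩
  have harc : ∀ t : Fin k, D (v t.castSucc) (v t.succ) := by
    intro t
    rcases Nat.eq_zero_or_pos t.1 with h0 | h0
    · have e1 : v t.castSucc = a := by
        simp [hv, Fin.coe_castSucc, h0]
      have e2 : v t.succ = l.get ⟨0, by omega⟩ := by
        simp [hv, Fin.val_succ, h0]
      rw [e1, e2]
      exact hchain.1 (by omega)
    · obtain ⟨s, hs⟩ : ∃ s, t.1 = s + 1 := ⟨t.1 - 1, by omega⟩
      have ht := t.isLt
      have e1 : v t.castSucc = l.get ⟨s, by omega⟩ := by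
        simp [hv, Fin.coe_castSucc, hs]
      have e2 : v t.succ = l.get ⟨s + 1, by omega⟩ := by
        simp [hv, Fin.val_succ, hs]
      rw [e1, e2]
      exact hchain.2 s (by omega)
  have hlast' : D (v 0) (v (Fin.last k)) := by
    have e1 : v 0 = a := by simp [hv]
    have e2 : v (Fin.last k) = l.getLast hne := by
      obtain ⟨s, hs⟩ : ∃ s, k = s + 1 := ⟨k - 1, by omega⟩
      have hsl : s < l.length := by omega
      have e3 : v (Fin.last k) = l.get ⟨s, hsl⟩ := by
        simp only [hv, Fin.val_last]
        have : (⟨(k : ℕ), by simp only [length_cons]; omega⟩ : Fin (a :: l).length)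
            = ⟨s + 1, by simp only [length_cons]; omega⟩ := by
          apply Fin.ext; simp [hs]
        rw [this]
        exact List.get_cons_succ
      rw [e3, List.getLast_eq_getElem hne]; show _ = l.get ⟨l.length - 1, by omega⟩
      congr 1
      apply Fin.ext
      simp only [Fin.val_mk]
      omega
    rw [e1, e2]
    exact hlast
  have := hsf k v harc hlast' ⟨i, by omega⟩ ⟨j, by omega⟩ (by simp [Fin.lt_def]; omega)
  exact this
end Paths

section Key
variable {D : V → V → Prop}

lemma shortcutFree_list' (hsf : ShortcutFree D) (a : V) (l : List V)
    (hc : List.Chain D a l) (hne : l ≠ [])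
    (hlast : D a (l.getLast hne)) {i j : ℕ} {x u : V} (hij : i < j) (hj : j < l.length + 1)
    (hx : (a :: l)[i]? = some x) (hu : (a :: l)[j]? = some u) : D x u := by
  have hi' : i < (a :: l).length := by simp; omega
  have hj' : j < (a :: l).length := by simp; omega
  rw [List.getElem?_eq_getElem hi', Option.some_inj] at hx
  rw [List.getElem?_eq_getElem hj', Option.some_inj] at hu
  have hres := shortcutFree_list hsf a l hc hne hlast i j hij hj
  simp only [List.get_eq_getElem] at hres
  rwa [hx, hu] at hres

lemma getElemq_mid : ∀ (a : V) (l m : List V),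
    (a :: (l ++ m))[l.length]? = some ((a :: l).getLast (cons_ne_nil a l)) := by
  intro a l
  induction l generalizing a with
  | nil => intro m; simp
  | cons b l ih =>
    intro m
    have : (a :: (b :: l ++ m))[l.length + 1]? = (b :: (l ++ m))[l.length]? := by
      simp
    rw [length_cons, this, ih b m, List.getLast_cons (l := b :: l) (cons_ne_nil b l)]

lemma semitrans_key (hac : DigraphAcyclic D) (hsf : ShortcutFree D) {p x u q : V}
    (h1 : Relation.ReflTransGen D p x) (h2 : Relation.TransGen D x u)
    (h3 : Relation.ReflTransGen D u q) (hpq : D p q) : D x u := by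
  obtain ⟨l₁, hc1, hl1⟩ := List.exists_isChain_cons_of_relationReflTransGen h1
  have hxu : x ≠ u := by rintro rfl; exact hac x h2
  obtain ⟨l₂, hc2, hl2⟩ := List.exists_isChain_cons_of_relationReflTransGen h2.to_reflTransGen
  have hl2ne : l₂ ≠ [] := by
    rintro rfl; simp at hl2; exact hxu hl2
  obtain ⟨l₃, hc3, hl3⟩ := List.exists_isChain_cons_of_relationReflTransGen h3
  have hlen2 : 0 < l₂.length := length_pos_iff.2 hl2ne
  have hLlen : (l₁ ++ (l₂ ++ l₃)).length = l₁.length + l₂.length + l₃.length := by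
    simp; omega
  have hLne : (l₁ ++ (l₂ ++ l₃)) ≠ [] := by
    apply length_pos_iff.1; rw [hLlen]; omega
  have hchain : List.Chain D p (l₁ ++ (l₂ ++ l₃)) := by
    apply chain_append_chain hc1
    rw [hl1]
    apply chain_append_chain hc2
    rw [hl2]
    exact hc3
  have hglcons : ∀ (c : V) (m : List V) (hm : m ≠ []),
      (c :: m).getLast (cons_ne_nil _ _) = m.getLast hm := fun c m hm => List.getLast_cons hm
  have hgetlast : (l₁ ++ (l₂ ++ l₃)).getLast hLne = q := by
    rcases eq_or_ne l₃ [] with rfl | hl3ne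
    · have hq : u = q := by simpa using hl3
      have e1 : (l₁ ++ (l₂ ++ [])).getLast hLne = l₂.getLast hl2ne := by
        have e : (l₁ ++ (l₂ ++ [])) = l₁ ++ l₂ := by simp
        rw [List.getLast_congr _ (by simp [hl2ne]) e]
        exact List.getLast_append_of_ne_nil _ hl2ne
      rw [e1, ← hglcons x l₂ hl2ne, hl2, hq]
    · have e1 : (l₁ ++ (l₂ ++ l₃)).getLast hLne = l₃.getLast hl3ne := by
        have e : (l₁ ++ (l₂ ++ l₃)) = (l₁ ++ l₂) ++ l₃ := by simp
        rw [List.getLast_congr _ (by simp [hl3ne]) e]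
        exact List.getLast_append_of_ne_nil _ hl3ne
      rw [e1, ← hglcons u l₃ hl3ne, hl3]
  have hlast : D p ((l₁ ++ (l₂ ++ l₃)).getLast hLne) := by rw [hgetlast]; exact hpq
  have hx : (p :: (l₁ ++ (l₂ ++ l₃)))[l₁.length]? = some x := by
    rw [getElemq_mid p l₁ (l₂ ++ l₃), hl1]
  have hu : (p :: (l₁ ++ (l₂ ++ l₃)))[l₁.length + l₂.length]? = some u := by
    have e : p :: (l₁ ++ (l₂ ++ l₃)) = p :: ((l₁ ++ l₂) ++ l₃) := by simp
    rw [e]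
    have e2 : l₁.length + l₂.length = (l₁ ++ l₂).length := by simp
    rw [e2, getElemq_mid p (l₁ ++ l₂) l₃]
    have e3 : (p :: (l₁ ++ l₂)).getLast (cons_ne_nil _ _) = u := by
      have e4 : p :: (l₁ ++ l₂) = (p :: l₁) ++ l₂ := by simp
      rw [List.getLast_congr _ (by simp) e4, List.getLast_append_of_ne_nil _ hl2ne,
        ← hglcons x l₂ hl2ne, hl2]
    rw [e3]
  exact shortcutFree_list' hsf p _ hchain hLne hlast (by omega) (by rw [hLlen]; omega) hx hu
end Key

end Stage3

section Stage4
variable {V : Type*} [DecidableEq V]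
variable {V : Type*} [DecidableEq V]


lemma count_take_le_one {l : List V} (hnd : l.Nodup) (v : V) (t : ℕ) :
    (l.take t).count v ≤ 1 :=
  le_trans ((take_sublist t l).count_le v) (nodup_iff_count_le_one.1 hnd v)

lemma count_take_notmem {l : List V} {v : V} (h : v ∉ l) (t : ℕ) :
    (l.take t).count v = 0 :=
  count_eq_zero.2 (fun hm => h (take_subset t l hm))

lemma count_take_mono_order {R : V → V → Prop} {p q : V} (hne : p ≠ q)
    (hR : Relation.TransGen R p q) :
    ∀ (l : List V), l.Pairwise (fun a b => ¬ Relation.TransGen R b a) → l.Nodup →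
      (q ∈ l → p ∈ l) → ∀ t, (l.take t).count q ≤ (l.take t).count p := by
  intro l
  induction l with
  | nil => intro _ _ _ t; simp
  | cons a l ih =>
    intro hpw hnd hmem t
    rcases Nat.eq_zero_or_pos t with rfl | ht
    · simp
    obtain ⟨s, rfl⟩ : ∃ s, t = s + 1 := ⟨t - 1, by omega⟩
    by_cases haq : a = q
    · subst haq
      have hp : p ∈ l := by
        rcases mem_cons.1 (hmem (mem_cons_self)) with h | h
        · exact absurd h hne
        · exact h
      exfalso
      exact (pairwise_cons.1 hpw).1 p hp hR
    · by_cases hap : a = p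
      · subst hap
        rw [take_succ_cons, count_cons_self, count_cons_of_ne haq]
        have h1 : (l.take s).count q ≤ 1 := count_take_le_one (nodup_cons.1 hnd).2 q s
        omega
      · rw [take_succ_cons, count_cons_of_ne haq,
          count_cons_of_ne hap]
        refine ih (pairwise_cons.1 hpw).2 (nodup_cons.1 hnd).2 ?_ s
        intro hq
        have := hmem (mem_cons_of_mem _ hq)
        rcases mem_cons.1 this with h | h
        · exact absurd h.symm hap
        · exact h

lemma count_take_strict {R : V → V → Prop} {p q : V} (hne : p ≠ q)
    (hR : Relation.TransGen R p q) :
    ∀ (l : List V), l.Pairwise (fun a b => ¬ Relation.TransGen R b a) → p ∈ l →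
      ∃ t ≤ l.length, (l.take t).count p = 1 ∧ (l.take t).count q = 0 := by
  intro l
  induction l with
  | nil => intro _ h; simp at h
  | cons a l ih =>
    intro hpw hp
    by_cases hap : a = p
    · subst hap
      refine ⟨1, by simp, ?_, ?_⟩
      · simp
      · rw [take_succ_cons, take_zero, count_cons_of_ne hne]
        simp
    · have hp' : p ∈ l := by
        rcases mem_cons.1 hp with h | h
        · exact absurd h.symm hap
        · exact h
      by_cases haq : a = q
      · subst haq
        exfalso
        exact (pairwise_cons.1 hpw).1 p hp' hR
      · obtain ⟨t, htl, h1, h2⟩ := ih (pairwise_cons.1 hpw).2 hp'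
        refine ⟨t + 1, by simp; omega, ?_, ?_⟩
        · rw [take_succ_cons, count_cons_of_ne hap]; exact h1
        · rw [take_succ_cons, count_cons_of_ne haq]; exact h2

lemma count_take_append (w₁ w₂ : List V) (v : V) (n : ℕ) :
    ((w₁ ++ w₂).take n).count v
      = (w₁.take n).count v + (w₂.take (n - w₁.length)).count v := by
  rw [take_append, count_append]

/-- window condition with offset `c`. -/
def WinZ (c : ℤ) (B : List V) (p q : V) : Prop :=
  ∀ t : ℕ, 0 ≤ c + ((B.take t).count p : ℤ) - ((B.take t).count q : ℤ) ∧
    c + ((B.take t).count p : ℤ) - ((B.take t).count q : ℤ) ≤ 1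

lemma winZ_append {c : ℤ} {A B : List V} {p q : V} (hA : WinZ c A p q)
    (hB : WinZ (c + (A.count p : ℤ) - A.count q) B p q) : WinZ c (A ++ B) p q := by
  intro t
  have e1 := count_take_append A B p t
  have e2 := count_take_append A B q t
  rcases le_or_gt t A.length with h | h
  · have h0 : t - A.length = 0 := by omega
    rw [h0, take_zero] at e1 e2
    have := hA t
    simp only [count_nil] at e1 e2
    omega
  · have hAa : A.take t = A := take_of_length_le (by omega)
    rw [hAa] at e1 e2
    have := hB (t - A.length)
    omega

lemma winZ_none {c : ℤ} {B : List V} {p q : V} (hc : 0 ≤ c ∧ c ≤ 1)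
    (hp : p ∉ B) (hq : q ∉ B) : WinZ c B p q := by
  intro t
  rw [count_take_notmem hp, count_take_notmem hq]
  omega

lemma winZ_p_only {B : List V} {p q : V} (hnd : B.Nodup) (hq : q ∉ B) :
    WinZ 0 B p q := by
  intro t
  have := count_take_le_one hnd p t
  rw [count_take_notmem hq]
  omega

lemma winZ_q_only {B : List V} {p q : V} (hnd : B.Nodup) (hp : p ∉ B) :
    WinZ 1 B p q := by
  intro t
  have := count_take_le_one hnd q t
  rw [count_take_notmem hp]
  omega

lemma winZ_both {B : List V} {p q : V} (hnd : B.Nodup)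
    (hord : ∀ t, (B.take t).count q ≤ (B.take t).count p) : WinZ 0 B p q := by
  intro t
  have h1 := hord t
  have h2 := count_take_le_one hnd p t
  omega

lemma leads_join (L : List (List V)) (p q : V)
    (hbal : ∀ B ∈ L, B.count p = B.count q)
    (hwin : ∀ B ∈ L, WinZ 0 B p q) : Leads L.flatten p q := by
  induction L with
  | nil => intro n; simp
  | cons B L ih =>
    intro n
    have e1 : (((B :: L).flatten).take n).count p
        = (B.take n).count p + ((L.flatten).take (n - B.length)).count p :=
      count_take_append B L.flatten p n
    have e2 : (((B :: L).flatten).take n).count q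
        = (B.take n).count q + ((L.flatten).take (n - B.length)).count q :=
      count_take_append B L.flatten q n
    rcases le_or_gt n B.length with h | h
    · have h0 : n - B.length = 0 := by omega
      rw [h0, take_zero] at e1 e2
      simp only [count_nil] at e1 e2
      have := hwin B (mem_cons_self) n
      omega
    · have hBa : B.take n = B := take_of_length_le (by omega)
      rw [hBa] at e1 e2
      have hb := hbal B (mem_cons_self)
      have := ih (fun B' hB' => hbal B' (mem_cons_of_mem _ hB'))
        (fun B' hB' => hwin B' (mem_cons_of_mem _ hB')) (n - B.length)
      omega

lemma exists_prefix_join {L : List (List V)} {B : List V} (hB : B ∈ L) (p q : V)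
    (hbal : ∀ B' ∈ L, B'.count p = B'.count q) {c : ℤ}
    (hex : ∃ t, ((B.take t).count p : ℤ) - ((B.take t).count q : ℤ) = c) :
    ∃ n, (((L.flatten).take n).count p : ℤ) - (((L.flatten).take n).count q : ℤ) = c := by
  induction L with
  | nil => simp at hB
  | cons B' L ih =>
    rcases mem_cons.1 hB with rfl | hBL
    · obtain ⟨t, ht⟩ := hex
      refine ⟨min t B.length, ?_⟩
      have e1 : (((B :: L).flatten).take (min t B.length)).count p
          = (B.take (min t B.length)).count p + ((L.flatten).take (min t B.length - B.length)).count p :=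
        count_take_append B L.flatten p (min t B.length)
      have e2 : (((B :: L).flatten).take (min t B.length)).count q
          = (B.take (min t B.length)).count q + ((L.flatten).take (min t B.length - B.length)).count q :=
        count_take_append B L.flatten q (min t B.length)
      have h0 : min t B.length - B.length = 0 := by omega
      rw [h0, take_zero] at e1 e2
      simp only [count_nil] at e1 e2
      have ecp : (B.take (min t B.length)).count p = (B.take t).count p := by
        rcases le_or_gt t B.length with h | h
        · rw [min_eq_left h]
        · rw [min_eq_right (by omega), take_length, take_of_length_le (by omega)]
      have ecq : (B.take (min t B.length)).count q = (B.take t).count q := by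
        rcases le_or_gt t B.length with h | h
        · rw [min_eq_left h]
        · rw [min_eq_right (by omega), take_length, take_of_length_le (by omega)]
      omega
    · obtain ⟨n, hn⟩ := ih hBL (fun B'' hB'' => hbal B'' (mem_cons_of_mem _ hB''))
      refine ⟨B'.length + n, ?_⟩
      have e1 : (((B' :: L).flatten).take (B'.length + n)).count p
          = (B'.take (B'.length + n)).count p + ((L.flatten).take (B'.length + n - B'.length)).count p :=
        count_take_append B' L.flatten p (B'.length + n)
      have e2 : (((B' :: L).flatten).take (B'.length + n)).count q
          = (B'.take (B'.length + n)).count q + ((L.flatten).take (B'.length + n - B'.length)).count q :=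
        count_take_append B' L.flatten q (B'.length + n)
      have h0 : B'.length + n - B'.length = n := by omega
      rw [h0, take_of_length_le (Nat.le_add_right _ _)] at e1 e2
      have hb := hbal B' (mem_cons_self)
      omega

end Stage4

section Stage5
variable {V : Type*} [DecidableEq V]
section Constr
variable [Fintype V]

noncomputable def topoList (R : V → V → Prop) (h : ∀ v, ¬ Relation.TransGen R v v)
    (s : Finset V) : List V := (exists_topo h s).choose

lemma topoList_nodup (R : V → V → Prop) (h) (s : Finset V) :
    (topoList R h s).Nodup := (exists_topo h s).choose_spec.1
lemma topoList_mem (R : V → V → Prop) (h) (s : Finset V) (v : V) :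
    v ∈ topoList R h s ↔ v ∈ s := (exists_topo h s).choose_spec.2.1 v
lemma topoList_pw (R : V → V → Prop) (h) (s : Finset V) :
    (topoList R h s).Pairwise (fun a b => ¬ Relation.TransGen R b a) :=
  (exists_topo h s).choose_spec.2.2

variable (D : V → V → Prop)

open scoped Classical in
noncomputable def ancS (x : V) : Finset V :=
  Finset.univ.filter (fun y => y = x ∨ Relation.TransGen D y x)
open scoped Classical in
noncomputable def descS (u : V) : Finset V :=
  Finset.univ.filter (fun z => z = u ∨ Relation.TransGen D u z)

noncomputable def midS (x u : V) : Finset V := ((Finset.univ \ ancS D x) \ descS D u)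
noncomputable def restS (x : V) : Finset V := Finset.univ \ ancS D x

variable (hac : DigraphAcyclic D)

noncomputable def segE (x : V) : List V := topoList D hac (ancS D x)
noncomputable def segM1 (x u : V) : List V := topoList D hac (midS D x u)
noncomputable def segM2 (u : V) : List V := topoList D hac (descS D u)
noncomputable def segR (x : V) : List V := topoList D hac (restS D x)

noncomputable def gadget (x u : V) : List V :=
  segE D hac x ++ (segM1 D hac x u ++ (segE D hac x ++ (segM2 D hac u ++ segR D hac x)))

noncomputable def roundD : List V := topoList D hac Finset.univ

noncomputable def roundPQ (p q : V) (h1 : p ≠ q) (h2 : ¬ Relation.TransGen D q p) : List V :=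
  topoList (fun a b => D a b ∨ (a = p ∧ b = q)) (addPair_acyclic hac h1 h2) Finset.univ

variable (G : SimpleGraph V)

open scoped Classical in
noncomputable def blockFor (p q : V) : List (List V) :=
  if ¬ G.Adj p q ∧ p ≠ q ∧ Relation.TransGen D p q then [gadget D hac p q]
  else if h2 : ¬ G.Adj p q ∧ p ≠ q ∧ ¬ Relation.TransGen D p q ∧ ¬ Relation.TransGen D q p
    then [roundPQ D hac p q h2.2.1 h2.2.2.2] else []

noncomputable def allBlocks : List (List V) :=
  roundD D hac :: (Finset.univ.toList.flatMap fun p : V =>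
    Finset.univ.toList.flatMap fun q : V => blockFor D hac G p q)

noncomputable def bigWord : List V := (allBlocks D hac G).flatten

-- membership lemmas
open scoped Classical in
lemma mem_ancS {x v : V} : v ∈ ancS D x ↔ (v = x ∨ Relation.TransGen D v x) := by
  simp [ancS]
open scoped Classical in
lemma mem_descS {u v : V} : v ∈ descS D u ↔ (v = u ∨ Relation.TransGen D u v) := by
  simp [descS]
open scoped Classical in
lemma mem_midS {x u v : V} : v ∈ midS D x u ↔ (v ∉ ancS D x ∧ v ∉ descS D u) := by
  simp [midS]
open scoped Classical in
lemma mem_restS {x v : V} : v ∈ restS D x ↔ v ∉ ancS D x := by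
  simp [restS]

lemma self_mem_ancS {x : V} : x ∈ ancS D x := (mem_ancS D).2 (Or.inl rfl)
lemma self_mem_descS {u : V} : u ∈ descS D u := (mem_descS D).2 (Or.inl rfl)

end Constr

section Facts
variable [Fintype V]

lemma hDne {G : SimpleGraph V} {D : V → V → Prop} (ho : IsOrientation G D)
    {p q : V} (h : D p q) : p ≠ q := fun e => ((ho.2 p q).2 (Or.inl h)).ne e

lemma hDadj {G : SimpleGraph V} {D : V → V → Prop} (ho : IsOrientation G D)
    {p q : V} (h : D p q) : G.Adj p q := (ho.2 p q).2 (Or.inl h)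

lemma count_seg_of_mem (D : V → V → Prop) (hac : DigraphAcyclic D) {s : Finset V} {v : V} (h : v ∈ s) :
    (topoList D hac s).count v = 1 :=
  List.count_eq_one_of_mem (topoList_nodup D hac s) ((topoList_mem D hac s v).2 h)

lemma count_seg_of_not_mem (D : V → V → Prop) (hac : DigraphAcyclic D) {s : Finset V} {v : V} (h : v ∉ s) :
    (topoList D hac s).count v = 0 :=
  List.count_eq_zero_of_not_mem (fun hm => h ((topoList_mem D hac s v).1 hm))

lemma notmem_seg (D : V → V → Prop) (hac : DigraphAcyclic D) {s : Finset V} {v : V} (h : v ∉ s) : v ∉ topoList D hac s :=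
  fun hm => h ((topoList_mem D hac s v).1 hm)

lemma seg_ord (D : V → V → Prop) (hac : DigraphAcyclic D) {s : Finset V} {p q : V} (hne : p ≠ q) (hpq : D p q) (hp : p ∈ s) :
    ∀ t, ((topoList D hac s).take t).count q ≤ ((topoList D hac s).take t).count p :=
  count_take_mono_order hne (Relation.TransGen.single hpq) _
    (topoList_pw D hac s) (topoList_nodup D hac s)
    (fun _ => (topoList_mem D hac s p).2 hp)

lemma anc_closed (D : V → V → Prop) {x p q : V} (hpq : D p q) (hq : q ∈ ancS D x) : p ∈ ancS D x := by
  rcases (mem_ancS D).1 hq with rfl | h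
  · exact (mem_ancS D).2 (Or.inr (Relation.TransGen.single hpq))
  · exact (mem_ancS D).2 (Or.inr (Relation.TransGen.head hpq h))

lemma desc_closed (D : V → V → Prop) {u p q : V} (hpq : D p q) (hp : p ∈ descS D u) : q ∈ descS D u := by
  rcases (mem_descS D).1 hp with rfl | h
  · exact (mem_descS D).2 (Or.inr (Relation.TransGen.single hpq))
  · exact (mem_descS D).2 (Or.inr (h.tail hpq))

lemma anc_desc_disjoint (D : V → V → Prop) (hac : DigraphAcyclic D) {x u : V} (hxu : Relation.TransGen D x u) {v : V}
    (ha : v ∈ ancS D x) (hd : v ∈ descS D u) : False := by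
  rcases (mem_ancS D).1 ha with rfl | h1 <;> rcases (mem_descS D).1 hd with e2 | h2
  · exact hac _ (e2 ▸ hxu)
  · exact hac _ (hxu.trans h2)
  · exact hac _ (hxu.trans (e2 ▸ h1 : Relation.TransGen D u x))
  · exact hac _ ((hxu.trans h2).trans h1)

lemma winZ_eq {c c' : ℤ} {B : List V} {p q : V} (e : c' = c) (h : WinZ c B p q) :
    WinZ c' B p q := by rw [e]; exact h

lemma arc_anc_desc_false (D : V → V → Prop) (hac : DigraphAcyclic D)
    {G : SimpleGraph V} (ho : IsOrientation G D) (hsf : ShortcutFree D)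
    {x u : V} (hxu : Relation.TransGen D x u) (hnadj : ¬ G.Adj x u) {p q : V} (hp : p ∈ ancS D x) (hq : q ∈ descS D u)
    (hpq : D p q) : False := by
  have hpx : Relation.ReflTransGen D p x := by
    rcases (mem_ancS D).1 hp with rfl | h
    · exact Relation.ReflTransGen.refl
    · exact h.to_reflTransGen
  have huq : Relation.ReflTransGen D u q := by
    rcases (mem_descS D).1 hq with rfl | h
    · exact Relation.ReflTransGen.refl
    · exact h.to_reflTransGen
  exact hnadj (hDadj ho (semitrans_key hac hsf hpx hxu huq hpq))

lemma count_gadget (D : V → V → Prop) (hac : DigraphAcyclic D)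
    {x u : V} (hxu : Relation.TransGen D x u) (v : V) : (gadget D hac x u).count v = 2 := by
  unfold gadget segE segM1 segM2 segR
  simp only [count_append]
  by_cases ha : v ∈ ancS D x
  · have hd : v ∉ descS D u := fun hd => anc_desc_disjoint D hac hxu ha hd
    have hm : v ∉ midS D x u := fun hm => ((mem_midS D).1 hm).1 ha
    have hr : v ∉ restS D x := fun hr => ((mem_restS D).1 hr) ha
    rw [count_seg_of_mem D hac ha, count_seg_of_not_mem D hac hm,
      count_seg_of_not_mem D hac hd, count_seg_of_not_mem D hac hr]
  · by_cases hd : v ∈ descS D u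
    · have hm : v ∉ midS D x u := fun hm => ((mem_midS D).1 hm).2 hd
      have hr : v ∈ restS D x := (mem_restS D).2 ha
      rw [count_seg_of_mem D hac hd, count_seg_of_not_mem D hac hm,
        count_seg_of_not_mem D hac ha, count_seg_of_mem D hac hr]
    · have hm : v ∈ midS D x u := (mem_midS D).2 ⟨ha, hd⟩
      have hr : v ∈ restS D x := (mem_restS D).2 ha
      rw [count_seg_of_mem D hac hm, count_seg_of_not_mem D hac hd,
        count_seg_of_not_mem D hac ha, count_seg_of_mem D hac hr]

lemma gadget_window (D : V → V → Prop) (hac : DigraphAcyclic D)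
    {G : SimpleGraph V} (ho : IsOrientation G D) (hsf : ShortcutFree D)
    {x u : V} (hxu : Relation.TransGen D x u) (hnadj : ¬ G.Adj x u)
    {p q : V} (hpq : D p q) : WinZ 0 (gadget D hac x u) p q := by
  have hne := hDne ho hpq
  unfold gadget segE segM1 segM2 segR
  by_cases hqa : q ∈ ancS D x
  · -- (A,A)
    have hpa : p ∈ ancS D x := anc_closed D hpq hqa
    have hpm : p ∉ midS D x u := fun hm => ((mem_midS D).1 hm).1 hpa
    have hqm : q ∉ midS D x u := fun hm => ((mem_midS D).1 hm).1 hqa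
    have hpd : p ∉ descS D u := fun hd => anc_desc_disjoint D hac hxu hpa hd
    have hqd : q ∉ descS D u := fun hd => anc_desc_disjoint D hac hxu hqa hd
    have hpr : p ∉ restS D x := fun hr => ((mem_restS D).1 hr) hpa
    have hqr : q ∉ restS D x := fun hr => ((mem_restS D).1 hr) hqa
    refine winZ_append (winZ_both (topoList_nodup D hac _) (seg_ord D hac hne hpq hpa)) ?_
    refine winZ_eq (by
      rw [count_seg_of_mem D hac hpa, count_seg_of_mem D hac hqa]; try norm_num) ?_
    refine winZ_append (winZ_none (by norm_num) (notmem_seg D hac hpm) (notmem_seg D hac hqm)) ?_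
    refine winZ_eq (by
      rw [count_seg_of_not_mem D hac hpm, count_seg_of_not_mem D hac hqm]; try norm_num) ?_
    refine winZ_append (winZ_both (topoList_nodup D hac _) (seg_ord D hac hne hpq hpa)) ?_
    refine winZ_eq (by
      rw [count_seg_of_mem D hac hpa, count_seg_of_mem D hac hqa]; try norm_num) ?_
    refine winZ_append (winZ_none (by norm_num) (notmem_seg D hac hpd) (notmem_seg D hac hqd)) ?_
    refine winZ_eq (by
      rw [count_seg_of_not_mem D hac hpd, count_seg_of_not_mem D hac hqd]; try norm_num) ?_
    exact winZ_none (by norm_num) (notmem_seg D hac hpr) (notmem_seg D hac hqr)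
  · by_cases hpa : p ∈ ancS D x
    · -- (A,M)
      have hqd : q ∉ descS D u := fun hd =>
        arc_anc_desc_false D hac ho hsf hxu hnadj hpa hd hpq
      have hqm : q ∈ midS D x u := (mem_midS D).2 ⟨hqa, hqd⟩
      have hpm : p ∉ midS D x u := fun hm => ((mem_midS D).1 hm).1 hpa
      have hpd : p ∉ descS D u := fun hd => anc_desc_disjoint D hac hxu hpa hd
      have hpr : p ∉ restS D x := fun hr => ((mem_restS D).1 hr) hpa
      have hqr : q ∈ restS D x := (mem_restS D).2 hqa
      refine winZ_append (winZ_p_only (topoList_nodup D hac _) (notmem_seg D hac hqa)) ?_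
      refine winZ_eq (by
        rw [count_seg_of_mem D hac hpa, count_seg_of_not_mem D hac hqa]; try norm_num) ?_
      refine winZ_append (winZ_q_only (topoList_nodup D hac _) (notmem_seg D hac hpm)) ?_
      refine winZ_eq (by
        rw [count_seg_of_not_mem D hac hpm, count_seg_of_mem D hac hqm]; try norm_num) ?_
      refine winZ_append (winZ_p_only (topoList_nodup D hac _) (notmem_seg D hac hqa)) ?_
      refine winZ_eq (by
        rw [count_seg_of_mem D hac hpa, count_seg_of_not_mem D hac hqa]; try norm_num) ?_
      refine winZ_append (winZ_none (by norm_num) (notmem_seg D hac hpd) (notmem_seg D hac hqd)) ?_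
      refine winZ_eq (by
        rw [count_seg_of_not_mem D hac hpd, count_seg_of_not_mem D hac hqd]; try norm_num) ?_
      exact winZ_q_only (topoList_nodup D hac _) (notmem_seg D hac hpr)
    · by_cases hpd : p ∈ descS D u
      · -- (D,D)
        have hqd : q ∈ descS D u := desc_closed D hpq hpd
        have hpm : p ∉ midS D x u := fun hm => ((mem_midS D).1 hm).2 hpd
        have hqm : q ∉ midS D x u := fun hm => ((mem_midS D).1 hm).2 hqd
        have hpr : p ∈ restS D x := (mem_restS D).2 hpa
        refine winZ_append (winZ_none (by norm_num) (notmem_seg D hac hpa) (notmem_seg D hac hqa)) ?_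
        refine winZ_eq (by
          rw [count_seg_of_not_mem D hac hpa, count_seg_of_not_mem D hac hqa]; try norm_num) ?_
        refine winZ_append (winZ_none (by norm_num) (notmem_seg D hac hpm) (notmem_seg D hac hqm)) ?_
        refine winZ_eq (by
          rw [count_seg_of_not_mem D hac hpm, count_seg_of_not_mem D hac hqm]; try norm_num) ?_
        refine winZ_append (winZ_none (by norm_num) (notmem_seg D hac hpa) (notmem_seg D hac hqa)) ?_
        refine winZ_eq (by
          rw [count_seg_of_not_mem D hac hpa, count_seg_of_not_mem D hac hqa]; try norm_num) ?_
        refine winZ_append (winZ_both (topoList_nodup D hac _) (seg_ord D hac hne hpq hpd)) ?_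
        refine winZ_eq (by
          rw [count_seg_of_mem D hac hpd, count_seg_of_mem D hac hqd]; try norm_num) ?_
        exact winZ_both (topoList_nodup D hac _) (seg_ord D hac hne hpq hpr)
      · -- p in MID
        have hpm : p ∈ midS D x u := (mem_midS D).2 ⟨hpa, hpd⟩
        have hpr : p ∈ restS D x := (mem_restS D).2 hpa
        by_cases hqd : q ∈ descS D u
        · -- (M,D)
          have hqm : q ∉ midS D x u := fun hm => ((mem_midS D).1 hm).2 hqd
          refine winZ_append (winZ_none (by norm_num) (notmem_seg D hac hpa) (notmem_seg D hac hqa)) ?_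
          refine winZ_eq (by
            rw [count_seg_of_not_mem D hac hpa, count_seg_of_not_mem D hac hqa]; try norm_num) ?_
          refine winZ_append (winZ_p_only (topoList_nodup D hac _) (notmem_seg D hac hqm)) ?_
          refine winZ_eq (by
            rw [count_seg_of_mem D hac hpm, count_seg_of_not_mem D hac hqm]; try norm_num) ?_
          refine winZ_append (winZ_none (by norm_num) (notmem_seg D hac hpa) (notmem_seg D hac hqa)) ?_
          refine winZ_eq (by
            rw [count_seg_of_not_mem D hac hpa, count_seg_of_not_mem D hac hqa]; try norm_num) ?_
          refine winZ_append (winZ_q_only (topoList_nodup D hac _) (notmem_seg D hac hpd)) ?_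
          refine winZ_eq (by
            rw [count_seg_of_not_mem D hac hpd, count_seg_of_mem D hac hqd]; try norm_num) ?_
          exact winZ_both (topoList_nodup D hac _) (seg_ord D hac hne hpq hpr)
        · -- (M,M)
          have hqm : q ∈ midS D x u := (mem_midS D).2 ⟨hqa, hqd⟩
          refine winZ_append (winZ_none (by norm_num) (notmem_seg D hac hpa) (notmem_seg D hac hqa)) ?_
          refine winZ_eq (by
            rw [count_seg_of_not_mem D hac hpa, count_seg_of_not_mem D hac hqa]; try norm_num) ?_
          refine winZ_append (winZ_both (topoList_nodup D hac _) (seg_ord D hac hne hpq hpm)) ?_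
          refine winZ_eq (by
            rw [count_seg_of_mem D hac hpm, count_seg_of_mem D hac hqm]; try norm_num) ?_
          refine winZ_append (winZ_none (by norm_num) (notmem_seg D hac hpa) (notmem_seg D hac hqa)) ?_
          refine winZ_eq (by
            rw [count_seg_of_not_mem D hac hpa, count_seg_of_not_mem D hac hqa]; try norm_num) ?_
          refine winZ_append (winZ_none (by norm_num) (notmem_seg D hac hpd) (notmem_seg D hac hqd)) ?_
          refine winZ_eq (by
            rw [count_seg_of_not_mem D hac hpd, count_seg_of_not_mem D hac hqd]; try norm_num) ?_
          exact winZ_both (topoList_nodup D hac _) (seg_ord D hac hne hpq hpr)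

lemma gadget_witness (D : V → V → Prop) (hac : DigraphAcyclic D)
    {x u : V} (hxu : Relation.TransGen D x u) : ∃ t, (((gadget D hac x u).take t).count x : ℤ)
    - (((gadget D hac x u).take t).count u : ℤ) = 2 := by
  have hxa : x ∈ ancS D x := self_mem_ancS D
  have hud : u ∈ descS D u := self_mem_descS D
  have hua : u ∉ ancS D x := fun h => anc_desc_disjoint D hac hxu h hud
  have hxd : x ∉ descS D u := fun h => anc_desc_disjoint D hac hxu hxa h
  have hum : u ∉ midS D x u := fun hm => ((mem_midS D).1 hm).2 hud
  have hxm : x ∉ midS D x u := fun hm => ((mem_midS D).1 hm).1 hxa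
  refine ⟨(segE D hac x).length + ((segM1 D hac x u).length + (segE D hac x).length), ?_⟩
  have e1 : ∀ v : V, ((gadget D hac x u).take
        ((segE D hac x).length + ((segM1 D hac x u).length + (segE D hac x).length))).count v
      = (segE D hac x).count v + ((segM1 D hac x u).count v + (segE D hac x).count v) := by
    intro v
    unfold gadget
    rw [count_take_append, take_of_length_le (by omega),
      Nat.add_sub_cancel_left, count_take_append, take_of_length_le (by omega),
      Nat.add_sub_cancel_left, count_take_append, take_of_length_le (by omega),
      Nat.sub_self, take_zero]
    simp
  rw [e1 x, e1 u]
  unfold segE segM1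
  rw [count_seg_of_mem D hac hxa, count_seg_of_not_mem D hac hxm,
    count_seg_of_not_mem D hac hua, count_seg_of_not_mem D hac hum]
  norm_num
end Facts

section Assemble
variable [Fintype V]

lemma roundD_count (D : V → V → Prop) (hac : DigraphAcyclic D) (v : V) :
    (roundD D hac).count v = 1 :=
  count_seg_of_mem D hac (Finset.mem_univ v)

lemma roundPQ_count (D : V → V → Prop) (hac : DigraphAcyclic D) {p q : V}
    (h1 : p ≠ q) (h2 : ¬ Relation.TransGen D q p) (v : V) :
    (roundPQ D hac p q h1 h2).count v = 1 :=
  List.count_eq_one_of_mem (topoList_nodup _ _ _)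
    ((topoList_mem _ _ _ v).2 (Finset.mem_univ v))

lemma roundD_window {G : SimpleGraph V} (D : V → V → Prop) (hac : DigraphAcyclic D)
    (ho : IsOrientation G D) {p q : V} (hpq : D p q) : WinZ 0 (roundD D hac) p q := by
  unfold roundD
  exact winZ_both (topoList_nodup D hac _)
    (seg_ord D hac (hDne ho hpq) hpq (Finset.mem_univ p))

lemma roundPQ_window {G : SimpleGraph V} (D : V → V → Prop) (hac : DigraphAcyclic D)
    (ho : IsOrientation G D) {p' q' : V} (h1 : p' ≠ q') (h2 : ¬ Relation.TransGen D q' p')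
    {p q : V} (hpq : D p q) : WinZ 0 (roundPQ D hac p' q' h1 h2) p q := by
  unfold roundPQ
  refine winZ_both (topoList_nodup _ _ _) ?_
  exact count_take_mono_order (hDne ho hpq)
    (Relation.TransGen.single (Or.inl hpq)) _
    (topoList_pw _ _ _) (topoList_nodup _ _ _)
    (fun _ => (topoList_mem _ _ _ p).2 (Finset.mem_univ p))

lemma roundPQ_witness (D : V → V → Prop) (hac : DigraphAcyclic D) {p q : V}
    (h1 : p ≠ q) (h2 : ¬ Relation.TransGen D q p) :
    ∃ t, (((roundPQ D hac p q h1 h2).take t).count p : ℤ)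
      - (((roundPQ D hac p q h1 h2).take t).count q : ℤ) = 1 := by
  obtain ⟨t, -, hp, hq⟩ := count_take_strict h1
    (Relation.TransGen.single (Or.inr ⟨rfl, rfl⟩)) (roundPQ D hac p q h1 h2)
    (topoList_pw _ _ _) ((topoList_mem _ _ _ p).2 (Finset.mem_univ p))
  exact ⟨t, by rw [hp, hq]; norm_num⟩

variable (G : SimpleGraph V) (D : V → V → Prop) (hac : DigraphAcyclic D)

lemma blockFor_cases {p q : V} {B : List V} (hB : B ∈ blockFor D hac G p q) :
    (¬ G.Adj p q ∧ p ≠ q ∧ Relation.TransGen D p q ∧ B = gadget D hac p q) ∨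
    (∃ h2 : ¬ G.Adj p q ∧ p ≠ q ∧ ¬ Relation.TransGen D p q ∧ ¬ Relation.TransGen D q p,
      B = roundPQ D hac p q h2.2.1 h2.2.2.2) := by
  classical
  unfold blockFor at hB
  split_ifs at hB with hc1 hc2
  · exact Or.inl ⟨hc1.1, hc1.2.1, hc1.2.2, by simpa using hB⟩
  · exact Or.inr ⟨hc2, by simpa using hB⟩
  · simp at hB

lemma blockFor_pos1 {p q : V} (h : ¬ G.Adj p q ∧ p ≠ q ∧ Relation.TransGen D p q) :
    gadget D hac p q ∈ blockFor D hac G p q := by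
  classical
  unfold blockFor
  rw [if_pos h]
  exact mem_singleton_self _

lemma blockFor_pos2 {p q : V}
    (h : ¬ G.Adj p q ∧ p ≠ q ∧ ¬ Relation.TransGen D p q ∧ ¬ Relation.TransGen D q p) :
    roundPQ D hac p q h.2.1 h.2.2.2 ∈ blockFor D hac G p q := by
  classical
  unfold blockFor
  rw [if_neg (fun hc => h.2.2.1 hc.2.2), dif_pos h]
  exact mem_singleton_self _

lemma mem_allBlocks {p q : V} {B : List V} (hB : B ∈ blockFor D hac G p q) :
    B ∈ allBlocks D hac G := by
  refine mem_cons_of_mem _ (List.mem_flatMap.2 ⟨p, by simp, List.mem_flatMap.2 ⟨q, by simp, hB⟩⟩)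

lemma blocks_balanced : ∀ B ∈ allBlocks D hac G, ∀ p q : V, B.count p = B.count q := by
  intro B hB p q
  rcases mem_cons.1 hB with rfl | hB'
  · rw [roundD_count D hac p, roundD_count D hac q]
  · obtain ⟨p', hp', hB2⟩ := List.mem_flatMap.1 hB'
    obtain ⟨q', hq', hB3⟩ := List.mem_flatMap.1 hB2
    rcases blockFor_cases G D hac hB3 with ⟨-, -, hTG, rfl⟩ | ⟨h2, rfl⟩
    · rw [count_gadget D hac hTG p, count_gadget D hac hTG q]
    · rw [roundPQ_count D hac _ _ p, roundPQ_count D hac _ _ q]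

lemma blocks_window (ho : IsOrientation G D) (hsf : ShortcutFree D)
    {p q : V} (hpq : D p q) : ∀ B ∈ allBlocks D hac G, WinZ 0 B p q := by
  intro B hB
  rcases mem_cons.1 hB with rfl | hB'
  · exact roundD_window D hac ho hpq
  · obtain ⟨p', hp', hB2⟩ := List.mem_flatMap.1 hB'
    obtain ⟨q', hq', hB3⟩ := List.mem_flatMap.1 hB2
    rcases blockFor_cases G D hac hB3 with ⟨hnadj, hne', hTG, rfl⟩ | ⟨h2, rfl⟩
    · exact gadget_window D hac ho hsf hTG hnadj hpq
    · exact roundPQ_window D hac ho _ _ hpq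

end Assemble

theorem backward_dir [Fintype V] (G : SimpleGraph V) (D : V → V → Prop)
    (ho : IsOrientation G D) (hac : DigraphAcyclic D) (hsf : ShortcutFree D) :
    ∃ w : List V, (∀ v, v ∈ w) ∧ ∀ a b : V, a ≠ b → (Alternate w a b ↔ G.Adj a b) := by
  classical
  refine ⟨(allBlocks D hac G).flatten, ?_, ?_⟩
  · intro v
    have hv : v ∈ roundD D hac := by
      unfold roundD
      exact (topoList_mem _ _ _ v).2 (Finset.mem_univ v)
    exact List.mem_flatten.2 ⟨roundD D hac, mem_cons_self, hv⟩
  · intro a b hneq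
    have hbal : ∀ p q : V, ∀ B ∈ allBlocks D hac G, B.count p = B.count q :=
      fun p q B hB => blocks_balanced G D hac B hB p q
    constructor
    · intro halt
      by_contra hnadj
      rcases (alternate'_iff _ a b hneq).1 halt with hL | hL
      · by_cases h1 : Relation.TransGen D a b
        · obtain ⟨n, hn⟩ := exists_prefix_join
            (mem_allBlocks G D hac (blockFor_pos1 G D hac ⟨hnadj, hneq, h1⟩)) a b
            (hbal a b) (gadget_witness D hac h1)
          have h := hL n
          omega
        · by_cases h2 : Relation.TransGen D b a
          · obtain ⟨n, hn⟩ := exists_prefix_join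
              (mem_allBlocks G D hac (blockFor_pos1 G D hac
                ⟨fun h => hnadj h.symm, hneq.symm, h2⟩)) b a
              (hbal b a) (gadget_witness D hac h2)
            have h := hL n
            omega
          · obtain ⟨n, hn⟩ := exists_prefix_join
              (mem_allBlocks G D hac (blockFor_pos2 G D hac
                ⟨fun h => hnadj h.symm, hneq.symm, h2, h1⟩)) b a
              (hbal b a) (roundPQ_witness D hac _ _)
            have h := hL n
            omega
      · by_cases h1 : Relation.TransGen D a b
        · obtain ⟨n, hn⟩ := exists_prefix_join
            (mem_allBlocks G D hac (blockFor_pos1 G D hac ⟨hnadj, hneq, h1⟩)) a b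
            (hbal a b) (gadget_witness D hac h1)
          have h := hL n
          omega
        · by_cases h2 : Relation.TransGen D b a
          · obtain ⟨n, hn⟩ := exists_prefix_join
              (mem_allBlocks G D hac (blockFor_pos1 G D hac
                ⟨fun h => hnadj h.symm, hneq.symm, h2⟩)) b a
              (hbal b a) (gadget_witness D hac h2)
            have h := hL n
            omega
          · obtain ⟨n, hn⟩ := exists_prefix_join
              (mem_allBlocks G D hac (blockFor_pos2 G D hac
                ⟨hnadj, hneq, h1, h2⟩)) a b
              (hbal a b) (roundPQ_witness D hac _ _)
            have h := hL n
            omega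
    · intro hadj
      rcases (ho.2 a b).1 hadj with hD | hD
      · exact (alternate'_iff _ _ _ hneq).2 (Or.inl
          (leads_join _ a b (hbal a b) (blocks_window G D hac ho hsf hD)))
      · exact (alternate'_iff _ _ _ hneq).2 (Or.inr
          (leads_join _ b a (hbal b a) (blocks_window G D hac ho hsf hD)))

end Stage5

/-- A finite simple graph is word-representable if and only if it admits a
semi-transitive orientation. -/
theorem word_representable_iff_semi_transitive_orientation
    {V : Type*} [Fintype V] [DecidableEq V] (G : SimpleGraph V) :
    WordRepresentable G ↔ ∃ D : V → V → Prop, IsOrientation G D ∧ SemiTransitive D := by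
  constructor
  · rintro ⟨w, hall, hrep⟩
    exact forward_dir hall hrep
  · rintro ⟨D, ho, hac, hsf⟩
    obtain ⟨w, h1, h2⟩ := backward_dir G D ho hac hsf
    exact ⟨w, h1, h2⟩
end

section
/- Every 3-colorable finite simple graph is word-representable. -/
namespace TCWR

variable {V : Type*} [DecidableEq V]

def pr (x y : V) : V → Bool := fun z => decide (z = x ∨ z = y)

lemma pr_comm (x y : V) : pr x y = pr y x := by
  funext z; simp [pr, or_comm]

lemma pr_self_left (x y : V) : pr x y x = true := by simp [pr]
lemma pr_self_right (x y : V) : pr x y y = true := by simp [pr]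

lemma filter_pr_nil {l : List V} {x y : V} (hx : x ∉ l) (hy : y ∉ l) :
    l.filter (pr x y) = [] := by
  rw [List.filter_eq_nil_iff]
  rintro a ha
  simp only [pr, decide_eq_true_eq]
  rintro (rfl | rfl) <;> [exact hx ha; exact hy ha]

lemma filter_pr_left {l : List V} {x y : V} (hl : l.Nodup) (hx : x ∈ l) (hy : y ∉ l) :
    l.filter (pr x y) = [x] := by
  induction l with
  | nil => simp at hx
  | cons a t ih =>
    have hyt : y ∉ t := fun h => hy (List.mem_cons_of_mem _ h)
    by_cases hax : a = x
    · subst hax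
      have hat : a ∉ t := (List.nodup_cons.mp hl).1
      rw [List.filter_cons_of_pos (pr_self_left _ _),
        filter_pr_nil hat hyt]
    · have hxt : x ∈ t := by
        rcases List.mem_cons.mp hx with h | h; exact absurd h.symm hax; exact h
      have hay : a ≠ y := by rintro rfl; exact hy (List.mem_cons_self)
      rw [List.filter_cons_of_neg (by simp [pr, hax, hay])]
      exact ih (List.nodup_cons.mp hl).2 hxt hyt

lemma filter_pr_right {l : List V} {x y : V} (hl : l.Nodup) (hx : x ∉ l) (hy : y ∈ l) :
    l.filter (pr x y) = [y] := by
  rw [pr_comm]; exact filter_pr_left hl hy hx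

lemma filter_pr_both {l : List V} {x y : V} (hl : l.Nodup) (hx : x ∈ l) (hy : y ∈ l)
    (hxy : x ≠ y) :
    l.filter (pr x y) = [x, y] ∨ l.filter (pr x y) = [y, x] := by
  induction l with
  | nil => simp at hx
  | cons a t ih =>
    have hnd := (List.nodup_cons.mp hl).1
    have htd := (List.nodup_cons.mp hl).2
    by_cases hax : a = x
    · subst hax
      have hyt : y ∈ t := by
        rcases List.mem_cons.mp hy with h | h; exact absurd h.symm hxy; exact h
      left
      rw [List.filter_cons_of_pos (pr_self_left _ _), filter_pr_right htd hnd hyt]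
    · by_cases hay : a = y
      · subst hay
        have hxt : x ∈ t := by
          rcases List.mem_cons.mp hx with h | h; exact absurd h hxy; exact h
        right
        rw [List.filter_cons_of_pos (pr_self_right _ _), filter_pr_left htd hxt hnd]
      · have hxt : x ∈ t := by
          rcases List.mem_cons.mp hx with h | h; exact absurd h.symm hax; exact h
        have hyt : y ∈ t := by
          rcases List.mem_cons.mp hy with h | h; exact absurd h.symm hay; exact h
        rw [List.filter_cons_of_neg (by simp [pr, hax, hay])]
        exact ih htd hxt hyt

omit [DecidableEq V] in
lemma not_chain'_mid (s t : List V) (z : V) :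
    ¬ (s ++ z :: z :: t).Chain' (· ≠ ·) := by
  intro h
  exact (List.isChain_cons_cons.mp (List.isChain_append.mp h).2.1).1 rfl

omit [DecidableEq V] in
lemma chain'_flatten_replicate (n : ℕ) {x y : V} (hxy : x ≠ y) :
    ((List.replicate n [x, y, x, y]).flatten).Chain' (· ≠ ·) := by
  induction n with
  | zero => exact List.isChain_nil
  | succ n ih =>
    rw [List.replicate_succ, List.flatten_cons, List.Chain', List.isChain_append]
    refine ⟨by simp [List.isChain_cons_cons, hxy, hxy.symm], ih, ?_⟩
    intro a ha b hb
    have ha' : y = a := by simpa using ha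
    have hb' : x = b := by
      cases n with
      | zero => simp at hb
      | succ m =>
        rw [List.replicate_succ, List.flatten_cons] at hb
        simpa using hb
    rw [← ha', ← hb']; exact hxy.symm

omit [DecidableEq V] in
lemma filter_flatMap {α : Type*} (l : List α) (f : α → List V) (p : V → Bool) :
    (l.flatMap f).filter p = l.flatMap fun a => (f a).filter p := by
  induction l with
  | nil => simp
  | cons a t ih => simp [List.flatMap_cons, List.filter_append, ih]

omit [DecidableEq V] in
lemma flatMap_const {α : Type*} {l : List α} {f : α → List V} {c : List V}
    (h : ∀ a ∈ l, f a = c) :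
    l.flatMap f = (List.replicate l.length c).flatten := by
  induction l with
  | nil => simp
  | cons a t ih =>
    rw [List.flatMap_cons, h a (List.mem_cons_self), List.length_cons,
      List.replicate_succ, List.flatten_cons, ih fun b hb => h b (List.mem_cons_of_mem _ hb)]

/-! ### The construction -/

section Construction

variable [Fintype V] (col : V → Fin 3)

noncomputable def lst (k : Fin 3) : List V := (Finset.univ.filter (fun v => col v = k)).toList

variable {col} in
lemma mem_lst {k : Fin 3} {v : V} : v ∈ lst col k ↔ col v = k := by
  simp [lst]

lemma nodup_lst (k : Fin 3) : (lst col k).Nodup := Finset.nodup_toList _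

variable {col}
variable {x y : V}

lemma filter_lst_left {k : Fin 3} (hx : col x = k) (hy : col y ≠ k) :
    (lst col k).filter (pr x y) = [x] :=
  filter_pr_left (nodup_lst col k) (mem_lst.mpr hx) (fun h => hy (mem_lst.mp h))

lemma filter_lst_right {k : Fin 3} (hx : col x ≠ k) (hy : col y = k) :
    (lst col k).filter (pr x y) = [y] :=
  filter_pr_right (nodup_lst col k) (fun h => hx (mem_lst.mp h)) (mem_lst.mpr hy)

lemma filter_lst_none {k : Fin 3} (hx : col x ≠ k) (hy : col y ≠ k) :
    (lst col k).filter (pr x y) = [] :=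
  filter_pr_nil (fun h => hx (mem_lst.mp h)) (fun h => hy (mem_lst.mp h))

lemma filter_erase_left {k : Fin 3} {u : V} (hx : col x = k) (hy : col y ≠ k) (hu : u ≠ x) :
    ((lst col k).erase u).filter (pr x y) = [x] :=
  filter_pr_left ((nodup_lst col k).erase _)
    (((nodup_lst col k).mem_erase_iff).mpr ⟨Ne.symm hu, mem_lst.mpr hx⟩)
    (fun h => hy (mem_lst.mp (List.mem_of_mem_erase h)))

lemma filter_erase_left_self {k : Fin 3} (hx : col x = k) (hy : col y ≠ k) :
    ((lst col k).erase x).filter (pr x y) = [] :=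
  filter_pr_nil (fun h => (((nodup_lst col k).mem_erase_iff).mp h).1 rfl)
    (fun h => hy (mem_lst.mp (List.mem_of_mem_erase h)))

lemma filter_erase_right {k : Fin 3} {u : V} (hx : col x ≠ k) (hy : col y = k) (hu : u ≠ y) :
    ((lst col k).erase u).filter (pr x y) = [y] := by
  rw [pr_comm]; exact filter_erase_left hy hx hu

lemma filter_erase_right_self {k : Fin 3} (hx : col x ≠ k) (hy : col y = k) :
    ((lst col k).erase y).filter (pr x y) = [] := by
  rw [pr_comm]; exact filter_erase_left_self hy hx

lemma filter_erase_none {k : Fin 3} {u : V} (hx : col x ≠ k) (hy : col y ≠ k) :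
    ((lst col k).erase u).filter (pr x y) = [] :=
  filter_pr_nil (fun h => hx (mem_lst.mp (List.mem_of_mem_erase h)))
    (fun h => hy (mem_lst.mp (List.mem_of_mem_erase h)))

end Construction

section Blocks

variable [Fintype V] (G : SimpleGraph V) [DecidableRel G.Adj] (col : V → Fin 3)

noncomputable def Pu : List V := lst col 0 ++ lst col 1
noncomputable def Pd : List V := (lst col 0).reverse ++ (lst col 1).reverse
noncomputable def Ru : List V := lst col 2 ++ lst col 0
noncomputable def Rd : List V := (lst col 2).reverse ++ (lst col 0).reverse
noncomputable def Qu : List V := lst col 1 ++ lst col 2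
noncomputable def Qd : List V := (lst col 1).reverse ++ (lst col 2).reverse

noncomputable def pblk (u v : V) : List V :=
  if col u = 0 ∧ col v = 1 ∧ ¬ G.Adj u v then
    ((lst col 0).erase u) ++ ([v, u] ++ ((lst col 1).erase v))
  else Pu col

noncomputable def rblk (u v : V) : List V :=
  if col u = 0 ∧ col v = 2 ∧ ¬ G.Adj u v then
    ((lst col 2).erase v) ++ ([u, v] ++ ((lst col 0).erase u))
  else Ru col

noncomputable def qblk (u v : V) : List V :=
  if col u = 1 ∧ col v = 2 ∧ ¬ G.Adj u v then
    ((lst col 1).erase u) ++ ([v, u] ++ ((lst col 2).erase v))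
  else Qu col

noncomputable def seg (u v : V) : List V := pblk G col u v ++ (rblk G col u v ++ qblk G col u v)

noncomputable def word : List V :=
  (Pu col ++ (Ru col ++ Qu col)) ++ ((Pd col ++ (Rd col ++ Qd col)) ++
    ((Finset.univ : Finset (V × V)).toList.flatMap (fun a => seg G col a.1 a.2)))

end Blocks


section BlockFilters

set_option linter.unusedSectionVars false

variable [Fintype V] {G : SimpleGraph V} [DecidableRel G.Adj] {col : V → Fin 3}
variable {x y u v : V}

lemma ne_of_col {a b : V} {i j : Fin 3} (ha : col a = i) (hb : col b = j) (hij : i ≠ j) :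
    a ≠ b := fun h => hij (by rw [← ha, ← hb, h])

/-! pair (x,y) with colours (0,1) -/

lemma pblk01_good (hx : col x = 0) (hy : col y = 1) (hadj : G.Adj x y) :
    (pblk G col u v).filter (pr x y) = [x, y] := by
  have hy0 : col y ≠ 0 := by rw [hy]; decide
  have hx1 : col x ≠ 1 := by rw [hx]; decide
  unfold pblk
  split_ifs with hc
  · obtain ⟨hu0, hv1, hn⟩ := hc
    have hvx : v ≠ x := ne_of_col hv1 hx (by decide)
    have huy : u ≠ y := ne_of_col hu0 hy (by decide)
    by_cases hux : u = x
    · subst hux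
      by_cases hvy : v = y
      · subst hvy; exact absurd hadj hn
      · simp [List.filter_append, filter_erase_left_self hx hy0,
          filter_erase_right hx1 hy hvy, List.filter, pr, hvx, hvy]
    · by_cases hvy : v = y
      · subst hvy
        simp [List.filter_append, filter_erase_left hx hy0 hux,
          filter_erase_right_self hx1 hy, List.filter, pr, hux, huy]
      · simp [List.filter_append, filter_erase_left hx hy0 hux,
          filter_erase_right hx1 hy hvy, List.filter, pr, hux, huy, hvx, hvy]
  · simp [Pu, List.filter_append, filter_lst_left hx hy0, filter_lst_right hx1 hy]

lemma pblk01_bad (hx : col x = 0) (hy : col y = 1) (hn : ¬ G.Adj x y) :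
    (pblk G col x y).filter (pr x y) = [y, x] := by
  have hy0 : col y ≠ 0 := by rw [hy]; decide
  have hx1 : col x ≠ 1 := by rw [hx]; decide
  have hxy : x ≠ y := ne_of_col hx hy (by decide)
  unfold pblk
  rw [if_pos ⟨hx, hy, hn⟩]
  simp [List.filter_append, filter_erase_left_self hx hy0,
    filter_erase_right_self hx1 hy, List.filter, pr]

lemma rblk01 (hx : col x = 0) (hy : col y = 1) :
    (rblk G col u v).filter (pr x y) = [x] := by
  have hy0 : col y ≠ 0 := by rw [hy]; decide
  have hx2 : col x ≠ 2 := by rw [hx]; decide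
  have hy2 : col y ≠ 2 := by rw [hy]; decide
  unfold rblk
  split_ifs with hc
  · obtain ⟨hu0, hv2, hn⟩ := hc
    have hvx : v ≠ x := ne_of_col hv2 hx (by decide)
    have hvy : v ≠ y := ne_of_col hv2 hy (by decide)
    have huy : u ≠ y := ne_of_col hu0 hy (by decide)
    by_cases hux : u = x
    · subst hux
      simp [List.filter_append, filter_erase_none hx2 hy2,
        filter_erase_left_self hx hy0, List.filter, pr, hvx, hvy]
    · simp [List.filter_append, filter_erase_none hx2 hy2,
        filter_erase_left hx hy0 hux, List.filter, pr, hvx, hvy, hux, huy]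
  · simp [Ru, List.filter_append, filter_lst_none hx2 hy2, filter_lst_left hx hy0]

lemma qblk01 (hx : col x = 0) (hy : col y = 1) :
    (qblk G col u v).filter (pr x y) = [y] := by
  have hx1 : col x ≠ 1 := by rw [hx]; decide
  have hx2 : col x ≠ 2 := by rw [hx]; decide
  have hy2 : col y ≠ 2 := by rw [hy]; decide
  unfold qblk
  split_ifs with hc
  · obtain ⟨hu1, hv2, hn⟩ := hc
    have hvx : v ≠ x := ne_of_col hv2 hx (by decide)
    have hvy : v ≠ y := ne_of_col hv2 hy (by decide)
    have hux : u ≠ x := ne_of_col hu1 hx (by decide)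
    by_cases huy : u = y
    · subst huy
      simp [List.filter_append, filter_erase_right_self hx1 hy,
        filter_erase_none hx2 hy2, List.filter, pr, hvx, hvy]
    · simp [List.filter_append, filter_erase_right hx1 hy huy,
        filter_erase_none hx2 hy2, List.filter, pr, hvx, hvy, hux, huy]
  · simp [Qu, List.filter_append, filter_lst_right hx1 hy, filter_lst_none hx2 hy2]

/-! pair (x,y) with colours (0,2) -/

lemma pblk02 (hx : col x = 0) (hy : col y = 2) :
    (pblk G col u v).filter (pr x y) = [x] := by
  have hy0 : col y ≠ 0 := by rw [hy]; decide
  have hx1 : col x ≠ 1 := by rw [hx]; decide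
  have hy1 : col y ≠ 1 := by rw [hy]; decide
  unfold pblk
  split_ifs with hc
  · obtain ⟨hu0, hv1, hn⟩ := hc
    have hvx : v ≠ x := ne_of_col hv1 hx (by decide)
    have hvy : v ≠ y := ne_of_col hv1 hy (by decide)
    have huy : u ≠ y := ne_of_col hu0 hy (by decide)
    by_cases hux : u = x
    · subst hux
      simp [List.filter_append, filter_erase_left_self hx hy0,
        filter_erase_none hx1 hy1, List.filter, pr, hvx, hvy]
    · simp [List.filter_append, filter_erase_left hx hy0 hux,
        filter_erase_none hx1 hy1, List.filter, pr, hvx, hvy, hux, huy]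
  · simp [Pu, List.filter_append, filter_lst_left hx hy0, filter_lst_none hx1 hy1]

lemma rblk02_good (hx : col x = 0) (hy : col y = 2) (hadj : G.Adj x y) :
    (rblk G col u v).filter (pr x y) = [y, x] := by
  have hy0 : col y ≠ 0 := by rw [hy]; decide
  have hx2 : col x ≠ 2 := by rw [hx]; decide
  unfold rblk
  split_ifs with hc
  · obtain ⟨hu0, hv2, hn⟩ := hc
    have hvx : v ≠ x := ne_of_col hv2 hx (by decide)
    have huy : u ≠ y := ne_of_col hu0 hy (by decide)
    by_cases hux : u = x
    · subst hux
      by_cases hvy : v = y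
      · subst hvy; exact absurd hadj hn
      · simp [List.filter_append, filter_erase_right hx2 hy hvy,
          filter_erase_left_self hx hy0, List.filter, pr, hvx, hvy]
    · by_cases hvy : v = y
      · subst hvy
        simp [List.filter_append, filter_erase_right_self hx2 hy,
          filter_erase_left hx hy0 hux, List.filter, pr, hux, huy]
      · simp [List.filter_append, filter_erase_right hx2 hy hvy,
          filter_erase_left hx hy0 hux, List.filter, pr, hux, huy, hvx, hvy]
  · simp [Ru, List.filter_append, filter_lst_right hx2 hy, filter_lst_left hx hy0]

lemma rblk02_bad (hx : col x = 0) (hy : col y = 2) (hn : ¬ G.Adj x y) :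
    (rblk G col x y).filter (pr x y) = [x, y] := by
  have hy0 : col y ≠ 0 := by rw [hy]; decide
  have hx2 : col x ≠ 2 := by rw [hx]; decide
  have hxy : x ≠ y := ne_of_col hx hy (by decide)
  unfold rblk
  rw [if_pos ⟨hx, hy, hn⟩]
  simp [List.filter_append, filter_erase_right_self hx2 hy,
    filter_erase_left_self hx hy0, List.filter, pr]

lemma qblk02 (hx : col x = 0) (hy : col y = 2) :
    (qblk G col u v).filter (pr x y) = [y] := by
  have hx1 : col x ≠ 1 := by rw [hx]; decide
  have hy1 : col y ≠ 1 := by rw [hy]; decide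
  have hx2 : col x ≠ 2 := by rw [hx]; decide
  unfold qblk
  split_ifs with hc
  · obtain ⟨hu1, hv2, hn⟩ := hc
    have hux : u ≠ x := ne_of_col hu1 hx (by decide)
    have huy : u ≠ y := ne_of_col hu1 hy (by decide)
    have hvx : v ≠ x := ne_of_col hv2 hx (by decide)
    by_cases hvy : v = y
    · subst hvy
      simp [List.filter_append, filter_erase_none hx1 hy1,
        filter_erase_right_self hx2 hy, List.filter, pr, hux, huy]
    · simp [List.filter_append, filter_erase_none hx1 hy1,
        filter_erase_right hx2 hy hvy, List.filter, pr, hux, huy, hvx, hvy]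
  · simp [Qu, List.filter_append, filter_lst_none hx1 hy1, filter_lst_right hx2 hy]

/-! pair (x,y) with colours (1,2) -/

lemma pblk12 (hx : col x = 1) (hy : col y = 2) :
    (pblk G col u v).filter (pr x y) = [x] := by
  have hx0 : col x ≠ 0 := by rw [hx]; decide
  have hy0 : col y ≠ 0 := by rw [hy]; decide
  have hy1 : col y ≠ 1 := by rw [hy]; decide
  unfold pblk
  split_ifs with hc
  · obtain ⟨hu0, hv1, hn⟩ := hc
    have hux : u ≠ x := ne_of_col hu0 hx (by decide)
    have huy : u ≠ y := ne_of_col hu0 hy (by decide)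
    have hvy : v ≠ y := ne_of_col hv1 hy (by decide)
    by_cases hvx : v = x
    · subst hvx
      simp [List.filter_append, filter_erase_none hx0 hy0,
        filter_erase_left_self hx hy1, List.filter, pr, hux, huy]
    · simp [List.filter_append, filter_erase_none hx0 hy0,
        filter_erase_left hx hy1 hvx, List.filter, pr, hux, huy, hvx, hvy]
  · simp [Pu, List.filter_append, filter_lst_none hx0 hy0, filter_lst_left hx hy1]

lemma rblk12 (hx : col x = 1) (hy : col y = 2) :
    (rblk G col u v).filter (pr x y) = [y] := by
  have hx0 : col x ≠ 0 := by rw [hx]; decide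
  have hy0 : col y ≠ 0 := by rw [hy]; decide
  have hx2 : col x ≠ 2 := by rw [hx]; decide
  unfold rblk
  split_ifs with hc
  · obtain ⟨hu0, hv2, hn⟩ := hc
    have hux : u ≠ x := ne_of_col hu0 hx (by decide)
    have huy : u ≠ y := ne_of_col hu0 hy (by decide)
    have hvx : v ≠ x := ne_of_col hv2 hx (by decide)
    by_cases hvy : v = y
    · subst hvy
      simp [List.filter_append, filter_erase_right_self hx2 hy,
        filter_erase_none hx0 hy0, List.filter, pr, hux, huy]
    · simp [List.filter_append, filter_erase_right hx2 hy hvy,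
        filter_erase_none hx0 hy0, List.filter, pr, hux, huy, hvx, hvy]
  · simp [Ru, List.filter_append, filter_lst_right hx2 hy, filter_lst_none hx0 hy0]

lemma qblk12_good (hx : col x = 1) (hy : col y = 2) (hadj : G.Adj x y) :
    (qblk G col u v).filter (pr x y) = [x, y] := by
  have hy1 : col y ≠ 1 := by rw [hy]; decide
  have hx2 : col x ≠ 2 := by rw [hx]; decide
  unfold qblk
  split_ifs with hc
  · obtain ⟨hu1, hv2, hn⟩ := hc
    have hvx : v ≠ x := ne_of_col hv2 hx (by decide)
    have huy : u ≠ y := ne_of_col hu1 hy (by decide)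
    by_cases hux : u = x
    · subst hux
      by_cases hvy : v = y
      · subst hvy; exact absurd hadj hn
      · simp [List.filter_append, filter_erase_left_self hx hy1,
          filter_erase_right hx2 hy hvy, List.filter, pr, hvx, hvy]
    · by_cases hvy : v = y
      · subst hvy
        simp [List.filter_append, filter_erase_left hx hy1 hux,
          filter_erase_right_self hx2 hy, List.filter, pr, hux, huy]
      · simp [List.filter_append, filter_erase_left hx hy1 hux,
          filter_erase_right hx2 hy hvy, List.filter, pr, hux, huy, hvx, hvy]
  · simp [Qu, List.filter_append, filter_lst_left hx hy1, filter_lst_right hx2 hy]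

lemma qblk12_bad (hx : col x = 1) (hy : col y = 2) (hn : ¬ G.Adj x y) :
    (qblk G col x y).filter (pr x y) = [y, x] := by
  have hy1 : col y ≠ 1 := by rw [hy]; decide
  have hx2 : col x ≠ 2 := by rw [hx]; decide
  have hxy : x ≠ y := ne_of_col hx hy (by decide)
  unfold qblk
  rw [if_pos ⟨hx, hy, hn⟩]
  simp [List.filter_append, filter_erase_left_self hx hy1,
    filter_erase_right_self hx2 hy, List.filter, pr]

end BlockFilters


section TopSeg

set_option linter.unusedSectionVars false

variable [Fintype V] {G : SimpleGraph V} [DecidableRel G.Adj] {col : V → Fin 3}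
variable {x y : V}

lemma topU01 (hx : col x = 0) (hy : col y = 1) :
    (Pu col ++ (Ru col ++ Qu col)).filter (pr x y) = [x, y, x, y] := by
  have hy0 : col y ≠ 0 := by rw [hy]; decide
  have hx1 : col x ≠ 1 := by rw [hx]; decide
  have hx2 : col x ≠ 2 := by rw [hx]; decide
  have hy2 : col y ≠ 2 := by rw [hy]; decide
  simp [Pu, Ru, Qu, List.filter_append, filter_lst_left hx hy0,
    filter_lst_right hx1 hy, filter_lst_none hx2 hy2]

lemma topD01 (hx : col x = 0) (hy : col y = 1) :
    (Pd col ++ (Rd col ++ Qd col)).filter (pr x y) = [x, y, x, y] := by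
  have hy0 : col y ≠ 0 := by rw [hy]; decide
  have hx1 : col x ≠ 1 := by rw [hx]; decide
  have hx2 : col x ≠ 2 := by rw [hx]; decide
  have hy2 : col y ≠ 2 := by rw [hy]; decide
  simp [Pd, Rd, Qd, List.filter_append, List.filter_reverse, filter_lst_left hx hy0,
    filter_lst_right hx1 hy, filter_lst_none hx2 hy2]

lemma topU02 (hx : col x = 0) (hy : col y = 2) :
    (Pu col ++ (Ru col ++ Qu col)).filter (pr x y) = [x, y, x, y] := by
  have hy0 : col y ≠ 0 := by rw [hy]; decide
  have hx1 : col x ≠ 1 := by rw [hx]; decide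
  have hy1 : col y ≠ 1 := by rw [hy]; decide
  have hx2 : col x ≠ 2 := by rw [hx]; decide
  simp [Pu, Ru, Qu, List.filter_append, filter_lst_left hx hy0,
    filter_lst_none hx1 hy1, filter_lst_right hx2 hy]

lemma topD02 (hx : col x = 0) (hy : col y = 2) :
    (Pd col ++ (Rd col ++ Qd col)).filter (pr x y) = [x, y, x, y] := by
  have hy0 : col y ≠ 0 := by rw [hy]; decide
  have hx1 : col x ≠ 1 := by rw [hx]; decide
  have hy1 : col y ≠ 1 := by rw [hy]; decide
  have hx2 : col x ≠ 2 := by rw [hx]; decide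
  simp [Pd, Rd, Qd, List.filter_append, List.filter_reverse, filter_lst_left hx hy0,
    filter_lst_none hx1 hy1, filter_lst_right hx2 hy]

lemma topU12 (hx : col x = 1) (hy : col y = 2) :
    (Pu col ++ (Ru col ++ Qu col)).filter (pr x y) = [x, y, x, y] := by
  have hx0 : col x ≠ 0 := by rw [hx]; decide
  have hy0 : col y ≠ 0 := by rw [hy]; decide
  have hy1 : col y ≠ 1 := by rw [hy]; decide
  have hx2 : col x ≠ 2 := by rw [hx]; decide
  simp [Pu, Ru, Qu, List.filter_append, filter_lst_none hx0 hy0,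
    filter_lst_left hx hy1, filter_lst_right hx2 hy]

lemma topD12 (hx : col x = 1) (hy : col y = 2) :
    (Pd col ++ (Rd col ++ Qd col)).filter (pr x y) = [x, y, x, y] := by
  have hx0 : col x ≠ 0 := by rw [hx]; decide
  have hy0 : col y ≠ 0 := by rw [hy]; decide
  have hy1 : col y ≠ 1 := by rw [hy]; decide
  have hx2 : col x ≠ 2 := by rw [hx]; decide
  simp [Pd, Rd, Qd, List.filter_append, List.filter_reverse, filter_lst_none hx0 hy0,
    filter_lst_left hx hy1, filter_lst_right hx2 hy]

end TopSeg

section MainLemmas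

set_option linter.unusedSectionVars false

variable [Fintype V] {G : SimpleGraph V} [DecidableRel G.Adj] {col : V → Fin 3}
variable {x y : V}

lemma alt01 (hx : col x = 0) (hy : col y = 1) :
    ((word G col).filter (pr x y)).Chain' (· ≠ ·) ↔ G.Adj x y := by
  have hxy : x ≠ y := ne_of_col hx hy (by decide)
  constructor
  · intro hch
    by_contra hn
    obtain ⟨s, t, hst⟩ := List.append_of_mem
      (a := ((x, y) : V × V)) (l := (Finset.univ : Finset (V × V)).toList)
      (by simp [Finset.mem_toList])
    rw [word, hst, List.filter_append, topU01 hx hy, List.filter_append,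
      topD01 hx hy, filter_flatMap, List.flatMap_append, List.flatMap_cons] at hch
    have hseg : (seg G col (x, y).1 (x, y).2).filter (pr x y) = [y, x, x, y] := by
      show (seg G col x y).filter (pr x y) = _
      rw [seg, List.filter_append, List.filter_append, pblk01_bad hx hy hn,
        rblk01 hx hy, qblk01 hx hy]
      rfl
    rw [hseg] at hch
    exact not_chain'_mid
      ([x, y, x, y] ++ ([x, y, x, y] ++
        (s.flatMap (fun a => (seg G col a.1 a.2).filter (pr x y)) ++ [y])))
      (y :: t.flatMap (fun a => (seg G col a.1 a.2).filter (pr x y))) x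
      (by simpa [List.append_assoc] using hch)
  · intro hadj
    rw [word, List.filter_append, topU01 hx hy, List.filter_append,
      topD01 hx hy, filter_flatMap,
      flatMap_const (c := [x, y, x, y]) (fun a _ => by
        show (seg G col a.1 a.2).filter (pr x y) = _
        rw [seg, List.filter_append, List.filter_append, pblk01_good hx hy hadj,
          rblk01 hx hy, qblk01 hx hy]; rfl)]
    have := chain'_flatten_replicate
      ((Finset.univ : Finset (V × V)).toList.length + 2) hxy
    rw [List.replicate_succ, List.replicate_succ, List.flatten_cons,
      List.flatten_cons] at this
    simpa [List.append_assoc] using this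

lemma alt02 (hx : col x = 0) (hy : col y = 2) :
    ((word G col).filter (pr x y)).Chain' (· ≠ ·) ↔ G.Adj x y := by
  have hxy : x ≠ y := ne_of_col hx hy (by decide)
  constructor
  · intro hch
    by_contra hn
    obtain ⟨s, t, hst⟩ := List.append_of_mem
      (a := ((x, y) : V × V)) (l := (Finset.univ : Finset (V × V)).toList)
      (by simp [Finset.mem_toList])
    rw [word, hst, List.filter_append, topU02 hx hy, List.filter_append,
      topD02 hx hy, filter_flatMap, List.flatMap_append, List.flatMap_cons] at hch
    have hseg : (seg G col (x, y).1 (x, y).2).filter (pr x y) = [x, x, y, y] := by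
      show (seg G col x y).filter (pr x y) = _
      rw [seg, List.filter_append, List.filter_append, pblk02 hx hy,
        rblk02_bad hx hy hn, qblk02 hx hy]
      rfl
    rw [hseg] at hch
    exact not_chain'_mid
      ([x, y, x, y] ++ ([x, y, x, y] ++
        s.flatMap (fun a => (seg G col a.1 a.2).filter (pr x y))))
      (y :: y :: t.flatMap (fun a => (seg G col a.1 a.2).filter (pr x y))) x
      (by simpa [List.append_assoc] using hch)
  · intro hadj
    rw [word, List.filter_append, topU02 hx hy, List.filter_append,
      topD02 hx hy, filter_flatMap,
      flatMap_const (c := [x, y, x, y]) (fun a _ => by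
        show (seg G col a.1 a.2).filter (pr x y) = _
        rw [seg, List.filter_append, List.filter_append, pblk02 hx hy,
          rblk02_good hx hy hadj, qblk02 hx hy]; rfl)]
    have := chain'_flatten_replicate
      ((Finset.univ : Finset (V × V)).toList.length + 2) hxy
    rw [List.replicate_succ, List.replicate_succ, List.flatten_cons,
      List.flatten_cons] at this
    simpa [List.append_assoc] using this

lemma alt12 (hx : col x = 1) (hy : col y = 2) :
    ((word G col).filter (pr x y)).Chain' (· ≠ ·) ↔ G.Adj x y := by
  have hxy : x ≠ y := ne_of_col hx hy (by decide)
  constructor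
  · intro hch
    by_contra hn
    obtain ⟨s, t, hst⟩ := List.append_of_mem
      (a := ((x, y) : V × V)) (l := (Finset.univ : Finset (V × V)).toList)
      (by simp [Finset.mem_toList])
    rw [word, hst, List.filter_append, topU12 hx hy, List.filter_append,
      topD12 hx hy, filter_flatMap, List.flatMap_append, List.flatMap_cons] at hch
    have hseg : (seg G col (x, y).1 (x, y).2).filter (pr x y) = [x, y, y, x] := by
      show (seg G col x y).filter (pr x y) = _
      rw [seg, List.filter_append, List.filter_append, pblk12 hx hy,
        rblk12 hx hy, qblk12_bad hx hy hn]
      rfl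
    rw [hseg] at hch
    exact not_chain'_mid
      ([x, y, x, y] ++ ([x, y, x, y] ++
        (s.flatMap (fun a => (seg G col a.1 a.2).filter (pr x y)) ++ [x])))
      (x :: t.flatMap (fun a => (seg G col a.1 a.2).filter (pr x y))) y
      (by simpa [List.append_assoc] using hch)
  · intro hadj
    rw [word, List.filter_append, topU12 hx hy, List.filter_append,
      topD12 hx hy, filter_flatMap,
      flatMap_const (c := [x, y, x, y]) (fun a _ => by
        show (seg G col a.1 a.2).filter (pr x y) = _
        rw [seg, List.filter_append, List.filter_append, pblk12 hx hy,
          rblk12 hx hy, qblk12_good hx hy hadj]; rfl)]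
    have := chain'_flatten_replicate
      ((Finset.univ : Finset (V × V)).toList.length + 2) hxy
    rw [List.replicate_succ, List.replicate_succ, List.flatten_cons,
      List.flatten_cons] at this
    simpa [List.append_assoc] using this

lemma altsame (hxy : x ≠ y) (hk : col y = col x) :
    ¬ ((word G col).filter (pr x y)).Chain' (· ≠ ·) := by
  have fin3 : ∀ c : Fin 3, c = 0 ∨ c = 1 ∨ c = 2 := by decide
  intro hch
  rcases fin3 (col x) with hcx | hcx | hcx
  all_goals {
    first
    | (have hcy : col y = 0 := hk.trans hcx
       have h1x : col x ≠ 1 := by rw [hcx]; decide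
       have h1y : col y ≠ 1 := by rw [hcy]; decide
       have h2x : col x ≠ 2 := by rw [hcx]; decide
       have h2y : col y ≠ 2 := by rw [hcy]; decide
       obtain ⟨u, v, hne, he⟩ : ∃ u w : V, u ≠ w ∧
           (lst col 0).filter (pr x y) = [u, w] := by
         rcases filter_pr_both (nodup_lst col 0) (mem_lst.mpr hcx) (mem_lst.mpr hcy) hxy
           with h | h
         exacts [⟨x, y, hxy, h⟩, ⟨y, x, hxy.symm, h⟩]
       have hw : (word G col).filter (pr x y) =
           u :: v :: u :: v :: v :: u :: v :: u ::
             (((Finset.univ : Finset (V × V)).toList.flatMap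
               (fun a => seg G col a.1 a.2)).filter (pr x y)) := by
         simp [word, Pu, Pd, Ru, Rd, Qu, Qd, List.filter_append, List.filter_reverse, he,
           filter_lst_none h1x h1y, filter_lst_none h2x h2y]
       rw [hw] at hch
       exact not_chain'_mid [u, v, u]
         (u :: v :: u ::
           (((Finset.univ : Finset (V × V)).toList.flatMap
             (fun (a : V × V) => seg G col a.1 a.2)).filter (pr x y))) v hch)
    | (have hcy : col y = 1 := hk.trans hcx
       have h1x : col x ≠ 0 := by rw [hcx]; decide
       have h1y : col y ≠ 0 := by rw [hcy]; decide
       have h2x : col x ≠ 2 := by rw [hcx]; decide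
       have h2y : col y ≠ 2 := by rw [hcy]; decide
       obtain ⟨u, v, hne, he⟩ : ∃ u w : V, u ≠ w ∧
           (lst col 1).filter (pr x y) = [u, w] := by
         rcases filter_pr_both (nodup_lst col 1) (mem_lst.mpr hcx) (mem_lst.mpr hcy) hxy
           with h | h
         exacts [⟨x, y, hxy, h⟩, ⟨y, x, hxy.symm, h⟩]
       have hw : (word G col).filter (pr x y) =
           u :: v :: u :: v :: v :: u :: v :: u ::
             (((Finset.univ : Finset (V × V)).toList.flatMap
               (fun a => seg G col a.1 a.2)).filter (pr x y)) := by
         simp [word, Pu, Pd, Ru, Rd, Qu, Qd, List.filter_append, List.filter_reverse, he,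
           filter_lst_none h1x h1y, filter_lst_none h2x h2y]
       rw [hw] at hch
       exact not_chain'_mid [u, v, u]
         (u :: v :: u ::
           (((Finset.univ : Finset (V × V)).toList.flatMap
             (fun (a : V × V) => seg G col a.1 a.2)).filter (pr x y))) v hch)
    | (have hcy : col y = 2 := hk.trans hcx
       have h1x : col x ≠ 0 := by rw [hcx]; decide
       have h1y : col y ≠ 0 := by rw [hcy]; decide
       have h2x : col x ≠ 1 := by rw [hcx]; decide
       have h2y : col y ≠ 1 := by rw [hcy]; decide
       obtain ⟨u, v, hne, he⟩ : ∃ u w : V, u ≠ w ∧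
           (lst col 2).filter (pr x y) = [u, w] := by
         rcases filter_pr_both (nodup_lst col 2) (mem_lst.mpr hcx) (mem_lst.mpr hcy) hxy
           with h | h
         exacts [⟨x, y, hxy, h⟩, ⟨y, x, hxy.symm, h⟩]
       have hw : (word G col).filter (pr x y) =
           u :: v :: u :: v :: v :: u :: v :: u ::
             (((Finset.univ : Finset (V × V)).toList.flatMap
               (fun a => seg G col a.1 a.2)).filter (pr x y)) := by
         simp [word, Pu, Pd, Ru, Rd, Qu, Qd, List.filter_append, List.filter_reverse, he,
           filter_lst_none h1x h1y, filter_lst_none h2x h2y]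
       rw [hw] at hch
       exact not_chain'_mid [u, v, u]
         (u :: v :: u ::
           (((Finset.univ : Finset (V × V)).toList.flatMap
             (fun (a : V × V) => seg G col a.1 a.2)).filter (pr x y))) v hch) }

end MainLemmas


section Final

variable [Fintype V]

lemma mem_word (G : SimpleGraph V) [DecidableRel G.Adj] (col : V → Fin 3) (v : V) :
    v ∈ word G col := by
  have fin3 : ∀ c : Fin 3, c = 0 ∨ c = 1 ∨ c = 2 := by decide
  rw [word]
  apply List.mem_append_left
  rcases fin3 (col v) with h | h | h
  · exact List.mem_append_left _ (List.mem_append_left _ (mem_lst.mpr h))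
  · exact List.mem_append_left _ (List.mem_append_right _ (mem_lst.mpr h))
  · exact List.mem_append_right _
      (List.mem_append_left _ (List.mem_append_left _ (mem_lst.mpr h)))

end Final

end TCWR



lemma alternate_comm {V : Type*} [DecidableEq V] (w : List V) (x y : V) :
    Alternate w x y ↔ Alternate w y x := by
  unfold Alternate
  have : w.filter (fun z => decide (z = x ∨ z = y))
      = w.filter (fun z => decide (z = y ∨ z = x)) :=
    List.filter_congr (fun z _ => decide_eq_decide.mpr or_comm)
  rw [this]


/-- Every 3-colorable finite simple graph is word-representable. -/
theorem three_colorable_word_representable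
    {V : Type*} [Fintype V] [DecidableEq V] (G : SimpleGraph V)
    (h : G.Colorable 3) : WordRepresentable G := by
  classical
  obtain ⟨C⟩ := h
  haveI : DecidableRel G.Adj := Classical.decRel _
  let col : V → Fin 3 := fun v => C v
  have hvalid : ∀ {a b : V}, G.Adj a b → col a ≠ col b := fun hab => C.valid hab
  refine ⟨TCWR.word G col, fun v => TCWR.mem_word G col v, ?_⟩
  intro x y hxy
  have fin3 : ∀ c : Fin 3, c = 0 ∨ c = 1 ∨ c = 2 := by decide
  rcases fin3 (col x) with hx | hx | hx <;> rcases fin3 (col y) with hy | hy | hy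
  · exact iff_of_false (TCWR.altsame hxy (hy.trans hx.symm))
      (fun hadj => hvalid hadj (hx.trans hy.symm))
  · exact TCWR.alt01 hx hy
  · exact TCWR.alt02 hx hy
  · exact (alternate_comm _ x y).trans ((TCWR.alt01 hy hx).trans (G.adj_comm y x))
  · exact iff_of_false (TCWR.altsame hxy (hy.trans hx.symm))
      (fun hadj => hvalid hadj (hx.trans hy.symm))
  · exact TCWR.alt12 hx hy
  · exact (alternate_comm _ x y).trans ((TCWR.alt02 hy hx).trans (G.adj_comm y x))
  · exact (alternate_comm _ x y).trans ((TCWR.alt12 hy hx).trans (G.adj_comm y x))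
  · exact iff_of_false (TCWR.altsame hxy (hy.trans hx.symm))
      (fun hadj => hvalid hadj (hx.trans hy.symm))
end

section
/- For every odd integer n ≥ 5, the wheel graph W_n is not word-representable. -/
/-- The wheel graph `W n`: a cycle on the `n` vertices `some a`, `a : Fin n` (with `a` and `b`
adjacent when their indices differ by one modulo `n`), together with the hub `none`,
adjacent to all cycle vertices. -/
def wheel (n : ℕ) : SimpleGraph (Option (Fin n)) where
  Adj x y := x ≠ y ∧ (x = none ∨ y = none ∨ ∃ a b : Fin n,
      x = some a ∧ y = some b ∧ ((a.val + 1) % n = b.val ∨ (b.val + 1) % n = a.val))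
  symm := by
    constructor
    rintro x y ⟨hxy, h⟩
    refine ⟨hxy.symm, ?_⟩
    rcases h with h | h | ⟨a, b, ha, hb, hab⟩
    · exact Or.inr (Or.inl h)
    · exact Or.inl h
    · exact Or.inr (Or.inr ⟨b, a, hb, ha, hab.symm⟩)
  loopless := by constructor; rintro x ⟨h, -⟩; exact h rfl

namespace WheelAux

open List

variable {V : Type*} [DecidableEq V]

/-- The Boolean predicate used in `Alternate`. -/
abbrev pf (x y : V) : V → Bool := fun z => decide (z = x ∨ z = y)

lemma alternate_def (w : List V) (x y : V) :
    Alternate w x y ↔ (w.filter (pf x y)).Chain' (· ≠ ·) := Iff.rfl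

lemma filter_pair_comm (x y : V) (l : List V) : l.filter (pf x y) = l.filter (pf y x) :=
  List.filter_congr fun z _ => by simp [pf, or_comm]

lemma alternate_comm {w : List V} {x y : V} (h : Alternate w x y) : Alternate w y x := by
  rw [alternate_def, ← filter_pair_comm]; exact h

lemma filter_pair_all (x y : V) (l : List V) :
    ∀ z ∈ l.filter (pf x y), z = x ∨ z = y := fun z hz => by
  simpa [pf] using (mem_filter.mp hz).2

lemma count_filter_pair_left (x y : V) (l : List V) :
    (l.filter (pf x y)).count x = l.count x :=
  count_filter (by simp [pf])

lemma count_filter_pair_right (x y : V) (l : List V) :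
    (l.filter (pf x y)).count y = l.count y :=
  count_filter (by simp [pf])

lemma eq_rep {y : V} {t : List V} (h : ∀ z ∈ t, z = y) : t = replicate (t.count y) y := by
  have hc : t.count y = t.length := count_eq_length.mpr fun b hb => (h b hb).symm
  rw [hc]; exact eq_replicate_of_mem h

lemma enum_five {x y : V} (hxy : x ≠ y) :
    ∀ {l : List V}, (∀ z ∈ l, z = x ∨ z = y) → l.count x ≤ 1 → l.count y ≤ 1 →
      l = [] ∨ l = [x] ∨ l = [y] ∨ l = [x, y] ∨ l = [y, x] := by
  rintro (_ | ⟨a, t⟩) hall hx hy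
  · exact Or.inl rfl
  rcases hall a (mem_cons_self) with hax | hay
  · subst hax
    have hxt0 : t.count a = 0 := by rw [count_cons_self] at hx; omega
    have hxt : a ∉ t := count_eq_zero.mp hxt0
    have hally : ∀ z ∈ t, z = y := by
      intro z hz
      rcases hall z (mem_cons_of_mem a hz) with h | h
      · exact absurd (h ▸ hz) hxt
      · exact h
    have ht := eq_rep hally
    have hcy : t.count y ≤ 1 := by
      rw [count_cons] at hy; split at hy <;> omega
    rcases Nat.le_one_iff_eq_zero_or_eq_one.mp hcy with h0 | h1
    · rw [h0] at ht; simp only [replicate_zero] at ht; subst ht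
      exact Or.inr (Or.inl rfl)
    · rw [h1] at ht; simp only [replicate_one] at ht; subst ht
      exact Or.inr (Or.inr (Or.inr (Or.inl rfl)))
  · subst hay
    have hyt0 : t.count a = 0 := by rw [count_cons_self] at hy; omega
    have hyt : a ∉ t := count_eq_zero.mp hyt0
    have hallx : ∀ z ∈ t, z = x := by
      intro z hz
      rcases hall z (mem_cons_of_mem a hz) with h | h
      · exact h
      · exact absurd (h ▸ hz) hyt
    have ht := eq_rep hallx
    have hcx : t.count x ≤ 1 := by
      rw [count_cons] at hx; split at hx <;> omega
    rcases Nat.le_one_iff_eq_zero_or_eq_one.mp hcx with h0 | h1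
    · rw [h0] at ht; simp only [replicate_zero] at ht; subst ht
      exact Or.inr (Or.inr (Or.inl rfl))
    · rw [h1] at ht; simp only [replicate_one] at ht; subst ht
      exact Or.inr (Or.inr (Or.inr (Or.inr rfl)))

lemma enum_two {x y : V} (hxy : x ≠ y) {l : List V} (hall : ∀ z ∈ l, z = x ∨ z = y)
    (hx : l.count x = 1) (hy : l.count y = 1) : l = [x, y] ∨ l = [y, x] := by
  rcases enum_five hxy hall hx.le hy.le with rfl | rfl | rfl | h | h
  · simp at hx
  · rw [count_singleton'] at hy; simp [hxy] at hy
  · rw [count_singleton'] at hx; simp [hxy.symm] at hx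
  · exact Or.inl h
  · exact Or.inr h

lemma filter_pair_eq_iff {x y : V} (hxy : x ≠ y) :
    ∀ {B : List V}, B.count x = 1 → B.count y = 1 →
      (B.filter (pf x y) = [x, y] ↔ B.idxOf x < B.idxOf y) := by
  intro B
  induction B with
  | nil => intro hx _; simp at hx
  | cons a t ih =>
    intro hx hy
    by_cases hax : a = x
    · subst hax
      have hxt0 : t.count a = 0 := by rw [count_cons_self] at hx; omega
      have hxt : a ∉ t := count_eq_zero.mp hxt0
      have hyt : t.count y = 1 := by
        rw [count_cons] at hy; split at hy
        · next hcc => exact absurd (by simpa using hcc) hxy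
        · omega
      have hfil : t.filter (pf a y) = [y] := by
        have hall : ∀ z ∈ t.filter (pf a y), z = y := by
          intro z hz
          rcases filter_pair_all a y t z hz with rfl | rfl
          · exact absurd (mem_filter.mp hz).1 hxt
          · rfl
        have hcy : (t.filter (pf a y)).count y = 1 := by
          rw [count_filter_pair_right]; exact hyt
        have := eq_rep hall; rw [hcy] at this; simpa using this
      constructor
      · intro _
        rw [idxOf_cons_self, idxOf_cons_ne t hxy]
        exact Nat.succ_pos _
      · intro _
        rw [filter_cons, if_pos (by simp [pf]), hfil]
    · by_cases hay : a = y
      · subst hay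
        constructor
        · intro hf
          rw [filter_cons, if_pos (by simp [pf])] at hf
          obtain ⟨h1, -⟩ := List.cons_eq_cons.mp hf
          exact absurd h1 (fun h => hxy h.symm)
        · intro hlt
          rw [idxOf_cons_self] at hlt
          exact absurd hlt (Nat.not_lt_zero _)
      · have hx' : t.count x = 1 := by
          rw [count_cons] at hx; split at hx
          · next hcc => exact absurd (by simpa using hcc) hax
          · omega
        have hy' : t.count y = 1 := by
          rw [count_cons] at hy; split at hy
          · next hcc => exact absurd (by simpa using hcc) hay
          · omega
        rw [filter_cons, if_neg (by simp [pf, hax, hay]),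
          idxOf_cons_ne t hax, idxOf_cons_ne t hay, ih hx' hy']
        exact (Nat.succ_lt_succ_iff).symm

/-! ### Splitting a word at occurrences of the hub letter -/

def splitH (h : V) : List V → List (List V)
  | [] => [[]]
  | a :: t => if a = h then [] :: splitH h t
      else (a :: (splitH h t).headI) :: (splitH h t).tail

def glueH (h : V) : List (List V) → List V
  | [] => []
  | [B] => B
  | B :: C :: L => B ++ h :: glueH h (C :: L)

lemma glueH_nil (h : V) : glueH h [] = [] := rfl
lemma glueH_single (h : V) (B : List V) : glueH h [B] = B := rfl
lemma glueH_cons₂ (h : V) (B C : List V) (L : List (List V)) :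
    glueH h (B :: C :: L) = B ++ h :: glueH h (C :: L) := rfl

lemma splitH_ne_nil (h : V) (w : List V) : splitH h w ≠ [] := by
  cases w with
  | nil => simp [splitH]
  | cons a t => simp only [splitH]; split <;> simp

lemma splitH_exists_cons (h : V) (t : List V) : ∃ B L, splitH h t = B :: L := by
  cases hS : splitH h t with
  | nil => exact absurd hS (splitH_ne_nil h t)
  | cons B L => exact ⟨B, L, rfl⟩

lemma splitH_cons_pos (h : V) (t : List V) : splitH h (h :: t) = [] :: splitH h t := by
  simp [splitH]

lemma splitH_cons_neg {h a : V} (ha : a ≠ h) (t : List V) :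
    splitH h (a :: t) = (a :: (splitH h t).headI) :: (splitH h t).tail := by
  simp [splitH, ha]

lemma glue_splitH (h : V) : ∀ w : List V, glueH h (splitH h w) = w := by
  intro w
  induction w with
  | nil => rfl
  | cons a t ih =>
    obtain ⟨B, L, hBL⟩ := splitH_exists_cons h t
    by_cases ha : a = h
    · subst ha
      rw [splitH_cons_pos]
      rw [hBL] at ih ⊢
      rw [glueH_cons₂]
      simpa using ih
    · rw [splitH_cons_neg ha]
      rw [hBL] at ih ⊢
      cases L with
      | nil =>
        simp only [headI, tail]
        rw [glueH_single] at ih ⊢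
        rw [ih]
      | cons C L' =>
        simp only [headI, tail]
        rw [glueH_cons₂] at ih ⊢
        rw [cons_append, ih]

lemma length_splitH (h : V) : ∀ w : List V, (splitH h w).length = w.count h + 1 := by
  intro w
  induction w with
  | nil => simp [splitH]
  | cons a t ih =>
    by_cases ha : a = h
    · subst ha
      simp only [splitH_cons_pos, length_cons, ih, count_cons_self]
    · simp only [splitH_cons_neg ha, length_cons, length_tail]
      rw [count_cons, if_neg (by simpa using ha)]
      have hpos : 0 < (splitH h t).length := length_pos_iff.mpr (splitH_ne_nil h t)
      omega

lemma not_mem_splitH (h : V) : ∀ w : List V, ∀ B ∈ splitH h w, h ∉ B := by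
  intro w
  induction w with
  | nil => intro B hB; simp [splitH] at hB; simp [hB]
  | cons a t ih =>
    intro B hB
    obtain ⟨B', L', hBL⟩ := splitH_exists_cons h t
    by_cases ha : a = h
    · subst ha
      rw [splitH_cons_pos] at hB
      rcases mem_cons.mp hB with rfl | hB'
      · simp
      · exact ih B hB'
    · rw [splitH_cons_neg ha] at hB
      rcases mem_cons.mp hB with rfl | hB'
      · intro hmem
        rcases mem_cons.mp hmem with rfl | hmem
        · exact ha rfl
        · rw [hBL] at hmem
          exact ih B' (by rw [hBL]; exact mem_cons_self) (by simpa using hmem)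
      · exact ih B (mem_of_mem_tail hB')

lemma filter_glue_pos (h : V) (q : V → Bool) (hq : q h = true) :
    ∀ L : List (List V), (glueH h L).filter q = glueH h (L.map (filter q)) := by
  intro L
  induction L with
  | nil => rfl
  | cons B L ih =>
    cases L with
    | nil => rfl
    | cons C L' =>
      rw [glueH_cons₂, filter_append, filter_cons, if_pos hq, map_cons]
      rw [show (C :: L').map (filter q) = filter q C :: L'.map (filter q) from rfl]
      rw [glueH_cons₂, ← map_cons]
      rw [ih]

lemma filter_glue_neg (h : V) (q : V → Bool) (hq : q h = false) :
    ∀ L : List (List V), (glueH h L).filter q = (L.map (filter q)).flatten := by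
  intro L
  induction L with
  | nil => rfl
  | cons B L ih =>
    cases L with
    | nil => simp [glueH_single]
    | cons C L' =>
      rw [glueH_cons₂, filter_append, filter_cons, if_neg (by simp [hq]), ih]
      simp [flatten_cons]

lemma chain_rep_le_one {x : V} {c : ℕ} (h : Chain' (· ≠ ·) (replicate c x)) : c ≤ 1 := by
  by_contra hc
  obtain ⟨m, rfl⟩ : ∃ m, c = m + 2 := ⟨c - 2, by omega⟩
  rw [replicate_succ, replicate_succ] at h
  exact (isChain_cons_cons.mp h).1 rfl

lemma cnt {x h : V} :
    ∀ (cs : List ℕ) (c0 ck : ℕ),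
      Chain' (· ≠ ·) (glueH h ((c0 :: cs ++ [ck]).map (fun c => replicate c x))) →
      c0 ≤ 1 ∧ (∀ c ∈ cs, c = 1) ∧ ck ≤ 1 := by
  intro cs
  induction cs with
  | nil =>
    intro c0 ck hch
    have e : glueH h ((c0 :: [] ++ [ck]).map (fun c => replicate c x))
        = replicate c0 x ++ h :: replicate ck x := rfl
    rw [e] at hch
    rcases isChain_append.mp hch with ⟨h1, h2, -⟩
    exact ⟨chain_rep_le_one h1, by simp, chain_rep_le_one h2.tail⟩
  | cons c cs ih =>
    intro c0 ck hch
    have e : glueH h ((c0 :: (c :: cs) ++ [ck]).map (fun c => replicate c x))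
        = replicate c0 x ++ h :: glueH h ((c :: cs ++ [ck]).map (fun c => replicate c x)) := rfl
    rw [e] at hch
    rcases isChain_append.mp hch with ⟨h1, h2, -⟩
    have h3 : Chain' (· ≠ ·) (glueH h ((c :: cs ++ [ck]).map (fun c => replicate c x))) := h2.tail
    obtain ⟨hc_le, hcs, hck⟩ := ih c ck h3
    refine ⟨chain_rep_le_one h1, ?_, hck⟩
    intro d hd
    rcases mem_cons.mp hd with rfl | hd'
    · rcases Nat.eq_zero_or_pos d with rfl | hpos
      · exfalso
        cases cs with
        | nil =>
          have e2 : glueH h ((0 :: [] ++ [ck]).map (fun c => replicate c x))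
              = h :: replicate ck x := rfl
          rw [e2] at h2
          exact (isChain_cons_cons.mp h2).1 rfl
        | cons c' cs' =>
          have e2 : glueH h ((0 :: (c' :: cs') ++ [ck]).map (fun c => replicate c x))
              = h :: glueH h ((c' :: cs' ++ [ck]).map (fun c => replicate c x)) := rfl
          rw [e2] at h2
          exact (isChain_cons_cons.mp h2).1 rfl
      · omega
    · exact hcs d hd'

/-! ### Counts of letters in the blocks -/

lemma counts_of_alt_h {h x : V} {w : List V} {B0 Bk : List V} {Ms : List (List V)}
    (hsplit : splitH h w = B0 :: Ms ++ [Bk]) (hxh : x ≠ h) (Axh : Alternate w x h) :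
    B0.count x ≤ 1 ∧ (∀ M ∈ Ms, M.count x = 1) ∧ Bk.count x ≤ 1 := by
  have hq : (pf x h) h = true := by simp [pf]
  have hrep : ∀ B ∈ splitH h w, B.filter (pf x h) = replicate (B.count x) x := by
    intro B hB
    have hhB := not_mem_splitH h w B hB
    have hcong : B.filter (pf x h) = B.filter (fun z => decide (z = x)) := by
      apply List.filter_congr
      intro z hz
      have hzh : z ≠ h := fun e => hhB (e ▸ hz)
      simp [pf, hzh]
    rw [hcong]
    simpa using List.filter_eq (l := B) x
  have hw : w.filter (pf x h) = glueH h ((B0 :: Ms ++ [Bk]).map (filter (pf x h))) := by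
    conv_lhs => rw [← glue_splitH h w]
    rw [filter_glue_pos h _ hq, hsplit]
  have h0mem : B0 ∈ splitH h w := by rw [hsplit]; exact mem_cons_self
  have hkmem : Bk ∈ splitH h w := by
    rw [hsplit]; exact mem_cons_of_mem _ (mem_append_right _ (mem_singleton_self _))
  have hMmem : ∀ M ∈ Ms, M ∈ splitH h w := fun M hM => by
    rw [hsplit]; exact mem_cons_of_mem _ (mem_append_left _ hM)
  have hmap : (B0 :: Ms ++ [Bk]).map (filter (pf x h))
      = ((B0.count x :: Ms.map (count x) ++ [Bk.count x]).map (fun c => replicate c x)) := by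
    simp only [map_cons, map_append, map_map, map_nil]
    rw [hrep B0 h0mem, hrep Bk hkmem,
      show Ms.map (filter (pf x h)) = Ms.map ((fun c => replicate c x) ∘ count x) from
        List.map_congr_left fun M hM => by simpa using hrep M (hMmem M hM)]
  rw [hmap] at hw
  have hch := Axh
  rw [alternate_def, hw] at hch
  obtain ⟨h1, h2, h3⟩ := cnt (Ms.map (count x)) (B0.count x) (Bk.count x) hch
  exact ⟨h1, fun M hM => h2 _ (mem_map_of_mem hM), h3⟩

/-! ### Structure of the filtered word for a pair of spoke letters -/

lemma filter_pair_eq {h x y : V} {w : List V} {B0 Bk : List V} {Ms : List (List V)}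
    (hsplit : splitH h w = B0 :: Ms ++ [Bk]) (hxh : x ≠ h) (hyh : y ≠ h) :
    w.filter (pf x y)
      = B0.filter (pf x y) ++ (((Ms.map (filter (pf x y))).flatten) ++ Bk.filter (pf x y)) := by
  have hq : (pf x y) h = false := by simp [pf, Ne.symm hxh, Ne.symm hyh]
  conv_lhs => rw [← glue_splitH h w]
  rw [filter_glue_neg h _ hq, hsplit]
  simp [flatten_append]

lemma propagate {x y : V} :
    ∀ (vs : List (List V)) (e : List V),
      (∀ v ∈ vs, v = [x, y] ∨ v = [y, x]) →
      Chain' (· ≠ ·) (vs.flatten ++ e) →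
      (vs = [] ∨ vs.headI = [x, y]) →
      ∀ v ∈ vs, v = [x, y] := by
  intro vs
  induction vs with
  | nil => simp
  | cons v vs ih =>
    intro e hall hch hhead
    have hv : v = [x, y] := by
      rcases hhead with h | h
      · exact absurd h (cons_ne_nil _ _)
      · exact h
    subst hv
    have hch' : Chain' (· ≠ ·) (x :: y :: (vs.flatten ++ e)) := by
      simpa only [flatten_cons, cons_append, nil_append] using hch
    have hch2 : Chain' (· ≠ ·) (vs.flatten ++ e) := ((isChain_cons_cons.mp hch').2).tail
    have hhead2 : vs = [] ∨ vs.headI = [x, y] := by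
      cases vs with
      | nil => exact Or.inl rfl
      | cons v' vs' =>
        right
        rcases hall v' (mem_cons_of_mem _ (mem_cons_self)) with h | h
        · exact h
        · exfalso
          subst h
          have h2 := (isChain_cons_cons.mp hch').2
          simp only [flatten_cons, cons_append, nil_append] at h2
          exact (isChain_cons_cons.mp h2).1 rfl
    intro u hu
    rcases mem_cons.mp hu with rfl | hu'
    · rfl
    · exact ih e (fun v hv => hall v (mem_cons_of_mem _ hv)) hch2 hhead2 u hu'

lemma last_flatten {x y : V} :
    ∀ (vs : List (List V)), vs ≠ [] → (∀ v ∈ vs, v = [x, y]) →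
      vs.flatten.getLast? = some y := by
  intro vs
  induction vs with
  | nil => simp
  | cons v vs ih =>
    intro _ hall
    have hv := hall v (mem_cons_self)
    subst hv
    cases vs with
    | nil => rfl
    | cons v' vs' =>
      rw [flatten_cons, getLast?_append,
        ih (cons_ne_nil _ _) (fun u hu => hall u (mem_cons_of_mem _ hu))]
      rfl

lemma head_flatten {x y : V} :
    ∀ (vs : List (List V)) (e : List V), vs ≠ [] → (∀ v ∈ vs, v = [x, y]) →
      (vs.flatten ++ e).head? = some x := by
  intro vs e hne hall
  cases vs with
  | nil => exact absurd rfl hne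
  | cons v vs' =>
    have hv := hall v (mem_cons_self)
    subst hv
    rfl

lemma extract_struct {x y : V} (hxy : x ≠ y) {b0 e : List V} {vs : List (List V)}
    (hne : vs ≠ []) (hall2 : ∀ v ∈ vs, v = [x, y] ∨ v = [y, x]) (hhead : vs.headI = [x, y])
    (hb5 : b0 = [] ∨ b0 = [x] ∨ b0 = [y] ∨ b0 = [x, y] ∨ b0 = [y, x])
    (he5 : e = [] ∨ e = [x] ∨ e = [y] ∨ e = [x, y] ∨ e = [y, x])
    (hch : Chain' (· ≠ ·) (b0 ++ (vs.flatten ++ e))) :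
    (∀ v ∈ vs, v = [x, y]) ∧ (b0 = [] ∨ b0 = [y] ∨ b0 = [x, y]) ∧
      (e = [] ∨ e = [x] ∨ e = [x, y]) := by
  have hch1 : Chain' (· ≠ ·) (vs.flatten ++ e) := (isChain_append.mp hch).2.1
  have hallxy : ∀ v ∈ vs, v = [x, y] := propagate vs e hall2 hch1 (Or.inr hhead)
  have hjunc := (isChain_append.mp hch).2.2
  have hheadx : (vs.flatten ++ e).head? = some x := head_flatten vs e hne hallxy
  refine ⟨hallxy, ?_, ?_⟩
  · rcases hb5 with rfl | rfl | rfl | rfl | rfl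
    · exact Or.inl rfl
    · exact absurd (hjunc x rfl x hheadx) (by simp)
    · exact Or.inr (Or.inl rfl)
    · exact Or.inr (Or.inr rfl)
    · exact absurd (hjunc x rfl x hheadx) (by simp)
  · have hj2 := (isChain_append.mp hch1).2.2
    have hlast : vs.flatten.getLast? = some y := last_flatten vs hne hallxy
    rcases he5 with rfl | rfl | rfl | rfl | rfl
    · exact Or.inl rfl
    · exact Or.inr (Or.inl rfl)
    · exact absurd (hj2 y hlast y rfl) (by simp)
    · exact Or.inr (Or.inr rfl)
    · exact absurd (hj2 y hlast y rfl) (by simp)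

lemma assemble_mid {x y : V} (hxy : x ≠ y) :
    ∀ (vs : List (List V)), vs ≠ [] → (∀ v ∈ vs, v = [x, y]) →
      ∀ (e : List V), (e = [] ∨ e = [x] ∨ e = [x, y]) →
      Chain' (· ≠ ·) (vs.flatten ++ e) ∧ (vs.flatten ++ e).head? = some x := by
  intro vs
  induction vs with
  | nil => simp
  | cons v vs ih =>
    intro _ hall e he
    have hv := hall v (mem_cons_self)
    subst hv
    cases vs with
    | nil =>
      simp only [flatten_cons, flatten_nil, append_nil, cons_append, nil_append]
      rcases he with rfl | rfl | rfl
      · exact ⟨isChain_cons_cons.mpr ⟨hxy, isChain_singleton _⟩, rfl⟩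
      · exact ⟨isChain_cons_cons.mpr ⟨hxy, isChain_cons_cons.mpr ⟨hxy.symm, isChain_singleton _⟩⟩, rfl⟩
      · exact ⟨isChain_cons_cons.mpr ⟨hxy, isChain_cons_cons.mpr ⟨hxy.symm,
          isChain_cons_cons.mpr ⟨hxy, isChain_singleton _⟩⟩⟩, rfl⟩
    | cons v' vs' =>
      obtain ⟨hc, hh⟩ := ih (cons_ne_nil _ _) (fun u hu => hall u (mem_cons_of_mem _ hu)) e he
      constructor
      · show Chain' (· ≠ ·) (x :: y :: ((v' :: vs').flatten ++ e))
        refine isChain_cons_cons.mpr ⟨hxy, isChain_cons.mpr ⟨?_, hc⟩⟩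
        intro b hb
        rw [hh] at hb
        injection hb with hb'
        rw [← hb']
        exact hxy.symm
      · rfl

lemma assemble {x y : V} (hxy : x ≠ y) {vs : List (List V)} (hne : vs ≠ [])
    (hall : ∀ v ∈ vs, v = [x, y]) {b0 e : List V}
    (hb0 : b0 = [] ∨ b0 = [y] ∨ b0 = [x, y]) (he : e = [] ∨ e = [x] ∨ e = [x, y]) :
    Chain' (· ≠ ·) (b0 ++ (vs.flatten ++ e)) := by
  obtain ⟨hc, hh⟩ := assemble_mid hxy vs hne hall e he
  rcases hb0 with rfl | rfl | rfl
  · simpa using hc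
  · rw [singleton_append]
    refine isChain_cons.mpr ⟨?_, hc⟩
    intro b hb
    rw [hh] at hb
    injection hb with hb'
    rw [← hb']
    exact hxy.symm
  · rw [cons_append, singleton_append]
    refine isChain_cons_cons.mpr ⟨hxy, isChain_cons.mpr ⟨?_, hc⟩⟩
    intro b hb
    rw [hh] at hb
    injection hb with hb'
    rw [← hb']
    exact hxy.symm

lemma pair_struct {h x y : V} {w : List V} {B0 Bk : List V} {Ms : List (List V)}
    (hsplit : splitH h w = B0 :: Ms ++ [Bk]) (hMs : Ms ≠ []) (hxy : x ≠ y)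
    (hxh : x ≠ h) (hyh : y ≠ h)
    (Axh : Alternate w x h) (Ayh : Alternate w y h) (Axy : Alternate w x y)
    (hhead : Ms.headI.filter (pf x y) = [x, y]) :
    (∀ M ∈ Ms, M.filter (pf x y) = [x, y]) ∧
      (B0.filter (pf x y) = [] ∨ B0.filter (pf x y) = [y] ∨ B0.filter (pf x y) = [x, y]) ∧
      (Bk.filter (pf x y) = [] ∨ Bk.filter (pf x y) = [x] ∨ Bk.filter (pf x y) = [x, y]) := by
  obtain ⟨hx0, hxM, hxk⟩ := counts_of_alt_h hsplit hxh Axh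
  obtain ⟨hy0, hyM, hyk⟩ := counts_of_alt_h hsplit hyh Ayh
  have hall2 : ∀ v ∈ Ms.map (filter (pf x y)), v = [x, y] ∨ v = [y, x] := by
    intro v hv
    obtain ⟨M, hM, rfl⟩ := mem_map.mp hv
    exact enum_two hxy (filter_pair_all x y M)
      (by rw [count_filter_pair_left]; exact hxM M hM)
      (by rw [count_filter_pair_right]; exact hyM M hM)
  have hch : Chain' (· ≠ ·)
      ((B0.filter (pf x y)) ++ (((Ms.map (filter (pf x y))).flatten) ++ Bk.filter (pf x y))) := by
    have h' := Axy
    rw [alternate_def, filter_pair_eq hsplit hxh hyh] at h'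
    exact h'
  have hb5 := enum_five hxy (filter_pair_all x y B0)
    (by rw [count_filter_pair_left]; exact hx0) (by rw [count_filter_pair_right]; exact hy0)
  have he5 := enum_five hxy (filter_pair_all x y Bk)
    (by rw [count_filter_pair_left]; exact hxk) (by rw [count_filter_pair_right]; exact hyk)
  have hmapne : Ms.map (filter (pf x y)) ≠ [] := by simpa using hMs
  have hheadI : (Ms.map (filter (pf x y))).headI = [x, y] := by
    cases Ms with
    | nil => exact absurd rfl hMs
    | cons M Ms' => simpa using hhead
  obtain ⟨h1, h2, h3⟩ := extract_struct hxy hmapne hall2 hheadI hb5 he5 hch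
  exact ⟨fun M hM => h1 _ (mem_map_of_mem hM), h2, h3⟩

/-! ### The key "transitivity" lemma -/

lemma triple {h a b c : V} {w : List V} {B0 Bk : List V} {Ms : List (List V)}
    (hsplit : splitH h w = B0 :: Ms ++ [Bk]) (hMs : Ms ≠ [])
    (hab : a ≠ b) (hbc : b ≠ c) (hac : a ≠ c)
    (hah : a ≠ h) (hbh : b ≠ h) (hch : c ≠ h)
    (Aah : Alternate w a h) (Abh : Alternate w b h) (Ach : Alternate w c h)
    (Aab : Alternate w a b) (Abc : Alternate w b c)
    (ord1 : Ms.headI.filter (pf a b) = [a, b])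
    (ord2 : Ms.headI.filter (pf b c) = [b, c]) :
    Alternate w a c := by
  obtain ⟨ha0, haM, hak⟩ := counts_of_alt_h hsplit hah Aah
  obtain ⟨hb0, hbM, hbk⟩ := counts_of_alt_h hsplit hbh Abh
  obtain ⟨hc0, hcM, hck⟩ := counts_of_alt_h hsplit hch Ach
  obtain ⟨HabM, Hab0, Habk⟩ := pair_struct hsplit hMs hab hah hbh Aah Abh Aab ord1
  obtain ⟨HbcM, Hbc0, Hbck⟩ := pair_struct hsplit hMs hbc hbh hch Abh Ach Abc ord2
  have HacM : ∀ M ∈ Ms, M.filter (pf a c) = [a, c] := by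
    intro M hM
    have i1 : M.idxOf a < M.idxOf b :=
      (filter_pair_eq_iff hab (haM M hM) (hbM M hM)).mp (HabM M hM)
    have i2 : M.idxOf b < M.idxOf c :=
      (filter_pair_eq_iff hbc (hbM M hM) (hcM M hM)).mp (HbcM M hM)
    exact (filter_pair_eq_iff hac (haM M hM) (hcM M hM)).mpr (i1.trans i2)
  have hmm0 : a ∈ B0 → B0.filter (pf a c) = [a, c] := by
    intro haB
    have haB1 : B0.count a = 1 := by
      have := count_pos_iff.mpr haB; omega
    have hmemF : a ∈ B0.filter (pf a b) := mem_filter.mpr ⟨haB, by simp [pf]⟩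
    have hFab : B0.filter (pf a b) = [a, b] := by
      rcases Hab0 with h0 | h0 | h0
      · rw [h0] at hmemF; simp at hmemF
      · rw [h0] at hmemF; simp at hmemF; exact absurd hmemF hab
      · exact h0
    have hbB : b ∈ B0 := by
      have : b ∈ B0.filter (pf a b) := by rw [hFab]; simp
      exact (mem_filter.mp this).1
    have hbB1 : B0.count b = 1 := by
      have := count_pos_iff.mpr hbB; omega
    have hmemFb : b ∈ B0.filter (pf b c) := mem_filter.mpr ⟨hbB, by simp [pf]⟩
    have hFbc : B0.filter (pf b c) = [b, c] := by
      rcases Hbc0 with h0 | h0 | h0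
      · rw [h0] at hmemFb; simp at hmemFb
      · rw [h0] at hmemFb; simp at hmemFb; exact absurd hmemFb hbc
      · exact h0
    have hcB : c ∈ B0 := by
      have : c ∈ B0.filter (pf b c) := by rw [hFbc]; simp
      exact (mem_filter.mp this).1
    have hcB1 : B0.count c = 1 := by
      have := count_pos_iff.mpr hcB; omega
    have i1 := (filter_pair_eq_iff hab haB1 hbB1).mp hFab
    have i2 := (filter_pair_eq_iff hbc hbB1 hcB1).mp hFbc
    exact (filter_pair_eq_iff hac haB1 hcB1).mpr (i1.trans i2)
  have Hac0 : B0.filter (pf a c) = [] ∨ B0.filter (pf a c) = [c] ∨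
      B0.filter (pf a c) = [a, c] := by
    rcases enum_five hac (filter_pair_all a c B0)
      (by rw [count_filter_pair_left]; exact ha0)
      (by rw [count_filter_pair_right]; exact hc0) with h | h | h | h | h
    · exact Or.inl h
    · exfalso
      have haB : a ∈ B0 := (mem_filter.mp (show a ∈ B0.filter (pf a c) by rw [h]; simp)).1
      have := hmm0 haB; rw [h] at this; simp at this
    · exact Or.inr (Or.inl h)
    · exact Or.inr (Or.inr h)
    · exfalso
      have haB : a ∈ B0 := (mem_filter.mp (show a ∈ B0.filter (pf a c) by rw [h]; simp)).1
      have h2 := hmm0 haB; rw [h] at h2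
      obtain ⟨h3, -⟩ := List.cons_eq_cons.mp h2
      exact hac h3.symm
  have hmmk : c ∈ Bk → Bk.filter (pf a c) = [a, c] := by
    intro hcB
    have hcB1 : Bk.count c = 1 := by
      have := count_pos_iff.mpr hcB; omega
    have hmemF : c ∈ Bk.filter (pf b c) := mem_filter.mpr ⟨hcB, by simp [pf]⟩
    have hFbc : Bk.filter (pf b c) = [b, c] := by
      rcases Hbck with h0 | h0 | h0
      · rw [h0] at hmemF; simp at hmemF
      · rw [h0] at hmemF; simp at hmemF; exact absurd hmemF (fun e => hbc e.symm)
      · exact h0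
    have hbB : b ∈ Bk := by
      have : b ∈ Bk.filter (pf b c) := by rw [hFbc]; simp
      exact (mem_filter.mp this).1
    have hbB1 : Bk.count b = 1 := by
      have := count_pos_iff.mpr hbB; omega
    have hmemFb : b ∈ Bk.filter (pf a b) := mem_filter.mpr ⟨hbB, by simp [pf]⟩
    have hFab : Bk.filter (pf a b) = [a, b] := by
      rcases Habk with h0 | h0 | h0
      · rw [h0] at hmemFb; simp at hmemFb
      · rw [h0] at hmemFb; simp at hmemFb; exact absurd hmemFb (fun e => hab e.symm)
      · exact h0
    have haB : a ∈ Bk := by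
      have : a ∈ Bk.filter (pf a b) := by rw [hFab]; simp
      exact (mem_filter.mp this).1
    have haB1 : Bk.count a = 1 := by
      have := count_pos_iff.mpr haB; omega
    have i1 := (filter_pair_eq_iff hab haB1 hbB1).mp hFab
    have i2 := (filter_pair_eq_iff hbc hbB1 hcB1).mp hFbc
    exact (filter_pair_eq_iff hac haB1 hcB1).mpr (i1.trans i2)
  have Hack : Bk.filter (pf a c) = [] ∨ Bk.filter (pf a c) = [a] ∨
      Bk.filter (pf a c) = [a, c] := by
    rcases enum_five hac (filter_pair_all a c Bk)
      (by rw [count_filter_pair_left]; exact hak)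
      (by rw [count_filter_pair_right]; exact hck) with h | h | h | h | h
    · exact Or.inl h
    · exact Or.inr (Or.inl h)
    · exfalso
      have hcB : c ∈ Bk := (mem_filter.mp (show c ∈ Bk.filter (pf a c) by rw [h]; simp)).1
      have := hmmk hcB; rw [h] at this; simp at this
    · exact Or.inr (Or.inr h)
    · exfalso
      have hcB : c ∈ Bk := (mem_filter.mp (show c ∈ Bk.filter (pf a c) by rw [h]; simp)).1
      have h2 := hmmk hcB; rw [h] at h2
      obtain ⟨h3, -⟩ := List.cons_eq_cons.mp h2
      exact hac h3.symm
  have hvs : ∀ v ∈ Ms.map (filter (pf a c)), v = [a, c] := by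
    intro v hv
    obtain ⟨M, hM, rfl⟩ := mem_map.mp hv
    exact HacM M hM
  have hchain := assemble hac (by simpa using hMs) hvs Hac0 Hack
  rw [alternate_def, filter_pair_eq hsplit hah hch]
  exact hchain

/-! ### Extending a representing word by its dedup (to get two hub occurrences) -/

lemma dedup_filter_comm (p : V → Bool) : ∀ l : List V, l.dedup.filter p = (l.filter p).dedup := by
  intro l
  induction l with
  | nil => rfl
  | cons a t ih =>
    by_cases hm : a ∈ t
    · rw [dedup_cons_of_mem hm]
      by_cases hp : p a
      · rw [filter_cons, if_pos hp, dedup_cons_of_mem (mem_filter.mpr ⟨hm, hp⟩), ih]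
      · rw [filter_cons, if_neg (by simpa using hp), ih]
    · rw [dedup_cons_of_notMem hm]
      by_cases hp : p a
      · rw [filter_cons, filter_cons, if_pos hp, if_pos hp,
          dedup_cons_of_notMem (fun hmem => hm (mem_filter.mp hmem).1), ih]
      · rw [filter_cons, filter_cons, if_neg (by simpa using hp), if_neg (by simpa using hp), ih]

lemma alt_dedup_struct {x y : V} (hxy : x ≠ y) :
    ∀ {f : List V}, Chain' (· ≠ ·) f → (∀ z ∈ f, z = x ∨ z = y) →
      ∀ {a : V}, f.getLast? = some a →
      f.dedup = [a] ∨ ∃ b, b ≠ a ∧ f.dedup = [b, a] := by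
  intro f
  induction f with
  | nil => intro _ _ a ha; simp at ha
  | cons c t ih =>
    intro hch hall a ha
    cases t with
    | nil =>
      have hca : c = a := by simpa using ha
      subst hca
      left
      rw [dedup_cons_of_notMem (not_mem_nil), dedup_nil]
    | cons d t' =>
      have hch' : Chain' (· ≠ ·) (d :: t') := (isChain_cons_cons.mp hch).2
      have hall' : ∀ z ∈ d :: t', z = x ∨ z = y := fun z hz => hall z (mem_cons_of_mem _ hz)
      have ha' : (d :: t').getLast? = some a := by rwa [getLast?_cons_cons] at ha
      have hmem_a : a ∈ d :: t' := mem_of_mem_getLast? ha'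
      rcases ih hch' hall' ha' with h1 | ⟨b, hba, h2⟩
      · by_cases hc : c ∈ d :: t'
        · left; rw [dedup_cons_of_mem hc, h1]
        · right
          exact ⟨c, fun h => hc (h ▸ hmem_a), by rw [dedup_cons_of_notMem hc, h1]⟩
      · by_cases hc : c ∈ d :: t'
        · right; exact ⟨b, hba, by rw [dedup_cons_of_mem hc, h2]⟩
        · exfalso
          have hbmem : b ∈ d :: t' := by
            have hb' : b ∈ (d :: t').dedup := by rw [h2]; simp
            exact mem_dedup.mp hb'
          have hcb : c ≠ b := fun h => hc (h ▸ hbmem)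
          have hca : c ≠ a := fun h => hc (h ▸ hmem_a)
          rcases hall c (mem_cons_self) with h3 | h3 <;>
            rcases hall' b hbmem with h4 | h4 <;>
            rcases hall' a hmem_a with h5 | h5 <;>
            simp_all
  
lemma alt_append_dedup {x y : V} (hxy : x ≠ y) {f : List V} (hch : Chain' (· ≠ ·) f)
    (hall : ∀ z ∈ f, z = x ∨ z = y) (hx : x ∈ f) (hy : y ∈ f) :
    Chain' (· ≠ ·) (f ++ f.dedup) := by
  have hfne : f ≠ [] := ne_nil_of_mem hx
  obtain ⟨a, ha⟩ : ∃ a, f.getLast? = some a :=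
    ⟨f.getLast hfne, getLast?_eq_getLast hfne⟩
  rcases alt_dedup_struct hxy hch hall ha with h1 | ⟨b, hba, h2⟩
  · exfalso
    have hxm : x ∈ f.dedup := mem_dedup.mpr hx
    have hym : y ∈ f.dedup := mem_dedup.mpr hy
    rw [h1] at hxm hym
    simp at hxm hym
    exact hxy (hxm.trans hym.symm)
  · refine isChain_append.mpr ?_
    refine ⟨hch, ?_, ?_⟩
    · rw [h2]; exact isChain_cons_cons.mpr ⟨hba, isChain_singleton _⟩
    · intro a' ha' b' hb'
      have haa : a' = a := by rw [ha] at ha'; injection ha' with hh; exact hh.symm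
      have hbb : b' = b := by rw [h2] at hb'; injection hb' with hh; exact hh.symm
      rw [haa, hbb]
      exact hba.symm

lemma two_le_count_append_dedup {h : V} {w0 : List V} (hmem : h ∈ w0) :
    2 ≤ (w0 ++ w0.dedup).count h := by
  rw [count_append, count_dedup, if_pos hmem]
  have := count_pos_iff.mpr hmem
  omega

lemma decomp {h : V} {w : List V} (k2 : 2 ≤ w.count h) :
    ∃ (B0 Bk : List V) (Ms : List (List V)), splitH h w = B0 :: Ms ++ [Bk] ∧ Ms ≠ [] := by
  have hlen : (splitH h w).length = w.count h + 1 := length_splitH h w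
  cases hS : splitH h w with
  | nil => rw [hS] at hlen; simp at hlen
  | cons B0 rest =>
    rw [hS] at hlen
    simp only [length_cons] at hlen
    have hrl : 2 ≤ rest.length := by omega
    have hrne : rest ≠ [] := by
      intro h'; rw [h'] at hrl; simp at hrl
    refine ⟨B0, rest.getLast hrne, rest.dropLast, ?_, ?_⟩
    · exact congrArg _ (dropLast_append_getLast hrne).symm
    · have hdl : rest.dropLast.length = rest.length - 1 := length_dropLast
      intro h'
      rw [h'] at hdl
      simp at hdl
      omega

end WheelAux

/-- For every odd integer `n ≥ 5`, the wheel graph `W n` is not word-representable. -/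
theorem wheel_odd_not_word_representable (n : ℕ) (h5 : 5 ≤ n) (hodd : Odd n) :
    ¬ WordRepresentable (wheel n) := by
  classical
  open List WheelAux in
  rintro ⟨w0, hall0, hiff0⟩
  set hub : Option (Fin n) := none with hhub
  -- extend the word by its dedup so that the hub occurs at least twice
  set w : List (Option (Fin n)) := w0 ++ w0.dedup with hw
  have hiff : ∀ x y : Option (Fin n), x ≠ y → (Alternate w x y ↔ (wheel n).Adj x y) := by
    intro x y hxy
    constructor
    · intro hA
      apply (hiff0 x y hxy).mp
      rw [alternate_def] at hA ⊢
      rw [hw, filter_append] at hA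
      exact (List.isChain_append.mp hA).1
    · intro hAdj
      have hA0 := (hiff0 x y hxy).mpr hAdj
      rw [alternate_def] at hA0 ⊢
      rw [hw, filter_append, dedup_filter_comm]
      exact alt_append_dedup hxy hA0 (filter_pair_all x y w0)
        (List.mem_filter.mpr ⟨hall0 x, by simp [pf]⟩)
        (List.mem_filter.mpr ⟨hall0 y, by simp [pf]⟩)
  have k2 := WheelAux.two_le_count_append_dedup (h := hub) (hall0 hub)
  rw [← hw] at k2
  obtain ⟨B0, Bk, Ms, hsplit, hMs⟩ := WheelAux.decomp k2
  set B1 := Ms.headI with hB1def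
  have hB1 : B1 ∈ Ms := by
    cases Ms with
    | nil => exact absurd rfl hMs
    | cons M Ms' => exact List.mem_cons_self
  have hn : 0 < n := by omega
  set A : ℕ → Option (Fin n) := fun j => some ⟨j % n, Nat.mod_lt _ hn⟩ with hA
  have hAh : ∀ j, A j ≠ hub := fun j => by simp [hA, hhub]
  have hmodne : ∀ (j d : ℕ), 1 ≤ d → d < n → (j + d) % n ≠ j % n := by
    intro j d h1 h2 heq
    have hmod : j ≡ j + d [MOD n] := heq.symm
    have hdvd : n ∣ d := by
      have := (Nat.modEq_iff_dvd' (Nat.le_add_right j d)).mp hmod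
      simpa using this
    have := Nat.le_of_dvd (by omega) hdvd
    omega
  have hAeq : ∀ j j', j % n = j' % n → A j = A j' := by
    intro j j' hjj'; simp [hA, Fin.ext_iff, hjj']
  have hAne1 : ∀ j, A j ≠ A (j + 1) := by
    intro j he
    rw [hA] at he
    simp only [Option.some.injEq, Fin.mk.injEq] at he
    exact hmodne j 1 le_rfl (by omega) he.symm
  have hAne2 : ∀ j, A j ≠ A (j + 2) := by
    intro j he
    rw [hA] at he
    simp only [Option.some.injEq, Fin.mk.injEq] at he
    exact hmodne j 2 (by omega) (by omega) he.symm
  have hAdj : ∀ j, (wheel n).Adj (A j) (A (j + 1)) := by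
    intro j
    refine ⟨hAne1 j, Or.inr (Or.inr ⟨⟨j % n, Nat.mod_lt _ hn⟩, ⟨(j+1) % n, Nat.mod_lt _ hn⟩,
      rfl, rfl, Or.inl ?_⟩)⟩
    exact Nat.mod_add_mod j n 1
  have hNAdj : ∀ j, ¬ (wheel n).Adj (A j) (A (j + 2)) := by
    rintro j ⟨hne, hc | hc | ⟨a, b, ha, hb, hor⟩⟩
    · simp [hA] at hc
    · simp [hA] at hc
    · have ha' : a = ⟨j % n, Nat.mod_lt _ hn⟩ := by
        rw [hA] at ha; exact (Option.some_inj.mp ha).symm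
      have hb' : b = ⟨(j + 2) % n, Nat.mod_lt _ hn⟩ := by
        rw [hA] at hb; exact (Option.some_inj.mp hb).symm
      subst ha'; subst hb'
      simp only at hor
      rcases hor with h1 | h1
      · rw [Nat.mod_add_mod] at h1
        exact hmodne (j + 1) 1 le_rfl (by omega) h1.symm
      · rw [Nat.mod_add_mod] at h1
        exact hmodne j 3 (by omega) (by omega) h1
  have altH : ∀ j, Alternate w (A j) hub := by
    intro j
    exact (hiff _ _ (hAh j)).mpr ⟨hAh j, Or.inr (Or.inl rfl)⟩
  have altE : ∀ j, Alternate w (A j) (A (j + 1)) := fun j => (hiff _ _ (hAne1 j)).mpr (hAdj j)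
  have hAhub : ∀ j, A j ≠ hub := hAh
  have hcnt := fun j => (WheelAux.counts_of_alt_h hsplit (hAh j) (altH j)).2.1
  have hPor : ∀ j, B1.filter (pf (A j) (A (j+1))) = [A j, A (j+1)] ∨
      B1.filter (pf (A j) (A (j+1))) = [A (j+1), A j] := by
    intro j
    exact enum_two (hAne1 j) (filter_pair_all _ _ B1)
      (by rw [count_filter_pair_left]; exact hcnt j B1 hB1)
      (by rw [count_filter_pair_right]; exact hcnt (j+1) B1 hB1)
  set P : ℕ → Prop := fun j => B1.filter (pf (A j) (A (j+1))) = [A j, A (j+1)] with hP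
  have step1 : ∀ j, P j → P (j + 1) → False := by
    intro j h1 h2
    have halt := WheelAux.triple hsplit hMs (hAne1 j) (hAne1 (j+1)) (hAne2 j)
      (hAh j) (hAh (j+1)) (hAh (j+2))
      (altH j) (altH (j+1)) (altH (j+2))
      (altE j) (altE (j+1)) h1 h2
    exact hNAdj j ((hiff _ _ (hAne2 j)).mp halt)
  have step2 : ∀ j, ¬ P j → ¬ P (j + 1) → False := by
    intro j h1 h2
    have h1' := (hPor j).resolve_left h1
    have h2' := (hPor (j+1)).resolve_left h2
    have o1 : B1.filter (pf (A (j+2)) (A (j+1))) = [A (j+2), A (j+1)] := by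
      rw [← filter_pair_comm]; exact h2'
    have o2 : B1.filter (pf (A (j+1)) (A j)) = [A (j+1), A j] := by
      rw [← filter_pair_comm]; exact h1'
    have halt := WheelAux.triple hsplit hMs (Ne.symm (hAne1 (j+1))) (Ne.symm (hAne1 j))
      (Ne.symm (hAne2 j))
      (hAh (j+2)) (hAh (j+1)) (hAh j)
      (altH (j+2)) (altH (j+1)) (altH j)
      (alternate_comm (altE (j+1))) (alternate_comm (altE j)) o1 o2
    exact hNAdj j ((hiff _ _ (hAne2 j)).mp (alternate_comm halt))
  have hflip : ∀ j, P (j + 1) ↔ ¬ P j := by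
    intro j
    constructor
    · intro h2 h1; exact step1 j h1 h2
    · intro h1; by_contra h2; exact step2 j h1 h2
  have key : ∀ m, P m ↔ (P 0 ↔ Even m) := by
    intro m
    induction m with
    | zero => simp
    | succ m ih => rw [hflip m, ih, Nat.even_add_one]; tauto
  have hA0 : A n = A 0 := hAeq n 0 (by simp)
  have hA1 : A (n + 1) = A 1 := hAeq (n+1) 1 (Nat.add_mod_left n 1)
  have hPn : P n ↔ P 0 := by
    rw [hP]
    simp only
    rw [hA0, hA1]
  have hne : ¬ Even n := Nat.not_even_iff_odd.mpr hodd
  have hkn := key n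
  rw [hPn] at hkn
  tauto
end

section
/- The wheel graph W_7 (a 7-cycle plus a vertex adjacent to all seven cycle vertices) is not word-representable. -/
set_option linter.unusedSectionVars false

namespace Wheel7NWR

variable {α : Type*} [DecidableEq α]

/-- Prefix count, as an integer. -/
def C (w : List α) (a : α) (p : ℕ) : ℤ := ((w.take p).count a : ℤ)




lemma C_zero (w : List α) (a : α) : C w a 0 = 0 := by simp [C]

lemma C_step (w : List α) (a : α) (p : ℕ) :
    C w a (p+1) = C w a p ∨ C w a (p+1) = C w a p + 1 := by
  rcases e : w[p]? with - | b
  · left; simp [C, List.take_succ, e]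
  · by_cases hb : b = a
    · right; simp [C, List.take_succ, e, hb]
    · left; simp [C, List.take_succ, e, List.count_singleton', hb]

lemma C_mono (w : List α) (a : α) {p q : ℕ} (h : p ≤ q) : C w a p ≤ C w a q := by
  have h1 : w.take p = (w.take q).take p := by rw [List.take_take, Nat.min_eq_left h]
  rw [C, C, h1]
  exact_mod_cast ((w.take q).take_sublist p).count_le a

lemma C_get_of_step (w : List α) (a : α) (p : ℕ)
    (h : C w a (p+1) = C w a p + 1) : w[p]? = some a := by
  rcases e : w[p]? with - | b
  · exfalso; rw [C, C, List.take_succ, e] at h; simp at h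
  · by_cases hb : b = a
    · rw [← hb]
    · exfalso; rw [C, C, List.take_succ, e] at h
      simp [List.count_singleton', hb] at h

lemma C_step_of_ne (w : List α) (a b : α) (p : ℕ)
    (e : w[p]? = some a) (hb : b ≠ a) : C w b (p+1) = C w b p := by
  rw [C, C, List.take_succ, e]
  simp [List.count_singleton', Ne.symm hb]

lemma exists_C_step (w : List α) (a : α) (j : ℕ) (hj : j < w.count a) :
    ∃ p, C w a p = j ∧ C w a (p+1) = j + 1 := by
  induction w generalizing j with
  | nil => simp at hj
  | cons b w ih =>
    by_cases hb : b = a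
    · subst hb
      rcases j with - | j
      · exact ⟨0, by simp [C], by simp [C]⟩
      · rw [List.count_cons_self] at hj
        obtain ⟨p, h1, h2⟩ := ih j (by omega)
        refine ⟨p+1, ?_, ?_⟩
        · rw [C, List.take_succ_cons, List.count_cons_self]
          rw [C] at h1; push_cast; omega
        · rw [C, List.take_succ_cons, List.count_cons_self]
          rw [C] at h2; push_cast; omega
    · rw [List.count_cons_of_ne hb] at hj
      obtain ⟨p, h1, h2⟩ := ih j hj
      refine ⟨p+1, ?_, ?_⟩
      · rw [C, List.take_succ_cons, List.count_cons_of_ne hb]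
        rw [C] at h1; exact h1
      · rw [C, List.take_succ_cons, List.count_cons_of_ne hb]
        rw [C] at h2; exact h2

lemma exists_C_step' (w : List α) (a : α) (j : ℕ) (hj : (j:ℤ) < C w a w.length) :
    ∃ p, C w a p = j ∧ C w a (p+1) = j + 1 := by
  apply exists_C_step
  have h : C w a w.length = w.count a := by simp [C]
  omega

lemma C_length (w : List α) (a : α) : C w a w.length = w.count a := by
  simp [C]

def P (x y : α) : α → Bool := fun z => decide (z = x ∨ z = y)
def AltD (w : List α) (x y : α) : Prop :=
  ∀ p q, C w x p - C w y p - C w x q + C w y q ≤ 1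

example (w : List α) (x y : α) :
    (w.filter (fun z => z = x ∨ z = y)).Chain' (· ≠ ·) ↔ (w.filter (P x y)).Chain' (· ≠ ·) :=
  Iff.rfl

lemma P_x (x y : α) : P x y x = true := by simp [P]
lemma P_y (x y : α) : P x y y = true := by simp [P]


lemma alt_vals (x y : α) (hxy : x ≠ y) :
    ∀ (g : List α), g.Chain' (· ≠ ·) → (∀ z ∈ g, z = x ∨ z = y) →
    ∀ m, ((g.take m).count x : ℤ) - (g.take m).count y = 0 ∨
      ((g.take m).count x : ℤ) - (g.take m).count y = (if g.head? = some x then 1 else -1) := by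
  intro g
  induction g with
  | nil => intro _ _ m; left; simp
  | cons a g ih =>
    intro hc hmem m
    obtain ⟨hhd, htl⟩ := List.isChain_cons.mp hc
    rcases m with - | m
    · left; simp
    · rw [List.take_succ_cons]
      have ihm := ih htl (fun z hz => hmem z (List.mem_cons_of_mem a hz)) m
      have hval : ∀ b, g.head? = some b → (b = x ∨ b = y) ∧ a ≠ b := fun b e =>
        ⟨hmem b (List.mem_cons_of_mem a (List.mem_of_mem_head? e)), hhd b e⟩
      rcases hmem a ((List.mem_cons_self (a := a) (l := g))) with ha | ha
      all_goals subst ha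
      · rw [List.count_cons_self, List.count_cons_of_ne hxy, List.head?_cons,
          if_pos rfl]
        rcases ihm with h0 | he
        · right; push_cast at *; omega
        · rcases e : g.head? with - | b
          · have hg : g = [] := by cases g <;> simp_all
            subst hg; right; simp
          · obtain ⟨hb, hab⟩ := hval b e
            rcases hb with hb | hb
            · exact absurd hb.symm hab
            · rw [e, if_neg (by simp [hb]; exact Ne.symm hxy)] at he
              left; push_cast at *; omega
      · rw [List.count_cons_self, List.count_cons_of_ne (Ne.symm hxy), List.head?_cons,
          if_neg (by simp; exact Ne.symm hxy)]
        rcases ihm with h0 | he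
        · right; push_cast at *; omega
        · rcases e : g.head? with - | b
          · have hg : g = [] := by cases g <;> simp_all
            subst hg; right; simp
          · obtain ⟨hb, hab⟩ := hval b e
            rcases hb with hb | hb
            · rw [e, if_pos (by rw [hb])] at he
              left; push_cast at *; omega
            · exact absurd hb.symm hab


lemma nat_ivt (f : ℕ → ℕ) (h0 : f 0 = 0) (hstep : ∀ p, f (p+1) ≤ f p + 1) :
    ∀ N m, m ≤ f N → ∃ p, f p = m := by
  intro N
  induction N with
  | zero => intro m hm; exact ⟨0, by omega⟩
  | succ N ih =>
    intro m hm
    by_cases h : m ≤ f N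
    · exact ih m h
    · exact ⟨N+1, by have := hstep N; omega⟩

/-- prefix of the filtered word realized as a filtered prefix -/
lemma transfer (w : List α) (x y : α) (m : ℕ) (hm : m ≤ (w.filter (P x y)).length) :
    ∃ p, C w x p = (((w.filter (P x y)).take m).count x : ℤ) ∧
         C w y p = (((w.filter (P x y)).take m).count y : ℤ) := by
  set f : ℕ → ℕ := fun p => ((w.take p).filter (P x y)).length with hf
  have h0 : f 0 = 0 := by simp [hf]
  have hstep : ∀ p, f (p+1) ≤ f p + 1 := by
    intro p
    simp only [hf, List.take_succ, List.filter_append, List.length_append]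
    have : (w[p]?.toList.filter (P x y)).length ≤ 1 := by
      rcases w[p]? with - | b
      · simp
      · simp [List.filter]; split <;> simp
    omega
  have hN : f w.length = (w.filter (P x y)).length := by simp [hf]
  obtain ⟨p, hp⟩ := nat_ivt f h0 hstep w.length m (hN ▸ hm)
  have hpre : (w.take p).filter (P x y) = (w.filter (P x y)).take m := by
    have h1 : (w.take p).filter (P x y) <+: w.filter (P x y) :=
      (w.take_prefix p).filter (P x y)
    rw [List.prefix_iff_eq_take.mp h1]; simp only [hf] at hp; rw [hp]
  refine ⟨p, ?_, ?_⟩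
  · rw [C, ← List.count_filter (p := P x y) (by simp [P]), hpre]
  · rw [C, ← List.count_filter (p := P x y) (by simp [P]), hpre]

lemma count_w_eq (w : List α) (x y : α) (p : ℕ) :
    C w x p = (((w.filter (P x y)).take (((w.take p).filter (P x y)).length)).count x : ℤ) ∧
    C w y p = (((w.filter (P x y)).take (((w.take p).filter (P x y)).length)).count y : ℤ) := by
  have h1 : (w.take p).filter (P x y) <+: w.filter (P x y) :=
    (w.take_prefix p).filter (P x y)
  have hpre := List.prefix_iff_eq_take.mp h1
  constructor
  · rw [C, ← List.count_filter (p := P x y) (by simp [P]), ← hpre]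
  · rw [C, ← List.count_filter (p := P x y) (by simp [P]), ← hpre]



lemma alternate_iff (w : List α) (x y : α) (hxy : x ≠ y) :
    Alternate w x y ↔ AltD w x y := by
  constructor
  · intro halt p q
    have hchain : (w.filter (P x y)).Chain' (· ≠ ·) := halt
    have hm := alt_vals x y hxy (w.filter (P x y)) hchain
      (by intro z hz; have := List.of_mem_filter hz; simpa [P] using this)
    obtain ⟨hxp, hyp⟩ := count_w_eq w x y p
    obtain ⟨hxq, hyq⟩ := count_w_eq w x y q
    have h1 := hm (((w.take p).filter (P x y)).length)
    have h2 := hm (((w.take q).filter (P x y)).length)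
    rw [hxp, hyp, hxq, hyq]
    rcases h1 with h1 | h1 <;> rcases h2 with h2 | h2 <;>
      [skip; skip; skip; skip] <;> (try split_ifs at h1 h2) <;> omega
  · intro haltd
    by_contra hna
    have hnc : ¬ (w.filter (P x y)).Chain' (· ≠ ·) := hna
    unfold List.Chain' at hnc; rw [List.isChain_iff_getElem] at hnc
    push_neg at hnc
    obtain ⟨i, hi, hget⟩ := hnc
    have hlen : i + 2 ≤ (w.filter (P x y)).length := by omega
    set a := (w.filter (P x y)).get ⟨i, by omega⟩ with ha
    have e1 : (w.filter (P x y))[i]? = some a := by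
      rw [List.getElem?_eq_getElem (by omega : i < (w.filter (P x y)).length)]; rfl
    have e2 : (w.filter (P x y))[i+1]? = some a := by
      rw [List.getElem?_eq_getElem (by omega : i + 1 < (w.filter (P x y)).length)]
      exact congrArg some hget.symm
    have key : ∀ b : α, (((w.filter (P x y)).take (i+2)).count b : ℤ) =
        (((w.filter (P x y)).take i).count b : ℤ) + (if a = b then 2 else 0) := by
      intro b
      rw [show i+2 = (i+1)+1 from rfl, List.take_succ, List.take_succ, e1, e2]
      by_cases hab : a = b
      · subst hab; simp [List.count_append, List.count_cons]
      · simp [List.count_append, List.count_cons, hab]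
    have hmem : a = x ∨ a = y := by
      have h1 : a ∈ w.filter (P x y) := by rw [ha]; apply List.get_mem
      have := List.of_mem_filter h1
      simpa [P] using this
    obtain ⟨p, hp1, hp2⟩ := transfer w x y (i+2) hlen
    obtain ⟨q, hq1, hq2⟩ := transfer w x y i (by omega)
    rcases hmem with hax | hay
    · have := haltd p q
      rw [hp1, hp2, hq1, hq2] at this
      have kx := key x
      have ky := key y
      rw [if_pos hax] at kx
      rw [if_neg (by rw [hax]; exact hxy)] at ky
      omega
    · have := haltd q p
      rw [hp1, hp2, hq1, hq2] at this
      have kx := key x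
      have ky := key y
      rw [if_pos hay] at ky
      rw [if_neg (by rw [hay]; exact Ne.symm hxy)] at kx
      omega

lemma filter_dedup (l : List α) (p : α → Bool) : (l.dedup).filter p = (l.filter p).dedup := by
  induction l with
  | nil => simp
  | cons a l ih =>
    by_cases hm : a ∈ l
    · rw [List.dedup_cons_of_mem hm]
      by_cases hp : p a
      · rw [List.filter_cons_of_pos hp, List.dedup_cons_of_mem (List.mem_filter.mpr ⟨hm, hp⟩)]
        exact ih
      · rw [List.filter_cons_of_neg hp]; exact ih
    · rw [List.dedup_cons_of_notMem hm]
      by_cases hp : p a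
      · rw [List.filter_cons_of_pos hp, List.filter_cons_of_pos hp,
          List.dedup_cons_of_notMem (fun hc => hm (List.mem_of_mem_filter hc)), ih]
      · rw [List.filter_cons_of_neg hp, List.filter_cons_of_neg hp]; exact ih

lemma dedup_concat_suffix : ∀ (l : List α) (a : α), ∃ u, (l ++ [a]).dedup = u ++ [a] := by
  intro l a
  induction l with
  | nil => exact ⟨[], by simp⟩
  | cons b l ih =>
    obtain ⟨u, hu⟩ := ih
    by_cases hm : b ∈ l ++ [a]
    · exact ⟨u, by rw [List.cons_append, List.dedup_cons_of_mem hm, hu]⟩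
    · exact ⟨b :: u, by rw [List.cons_append, List.dedup_cons_of_notMem hm, hu]; rfl⟩

lemma pair_list (x y : α) (hxy : x ≠ y) (l : List α) (hn : l.Nodup) (hx : x ∈ l) (hy : y ∈ l)
    (hall : ∀ z ∈ l, z = x ∨ z = y) : l = [x, y] ∨ l = [y, x] := by
  match l with
  | [] => cases hx
  | [a] =>
    simp only [List.mem_singleton] at hx hy
    exact absurd (hx.trans hy.symm) hxy
  | a :: b :: t =>
    have hab : a ≠ b := by
      intro h
      exact (List.nodup_cons.mp hn).1 (h ▸ List.mem_cons_self (a := b) (l := t))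
    have ht : t = [] := by
      match t with
      | [] => rfl
      | c :: t =>
        exfalso
        have hca : c ≠ a := by
          intro h
          exact (List.nodup_cons.mp hn).1 (h ▸ List.mem_cons_of_mem b (List.mem_cons_self (a := c) (l := t)))
        have hcb : c ≠ b := by
          intro h
          exact (List.nodup_cons.mp (List.nodup_cons.mp hn).2).1 (h ▸ List.mem_cons_self (a := c) (l := t))
        have hc := hall c (by simp)
        have hA := hall a (by simp)
        have hB := hall b (by simp)
        rcases hc with hc | hc <;> rcases hA with hA | hA <;> rcases hB with hB | hB <;>
          simp_all
    subst ht
    have hA := hall a (by simp)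
    have hB := hall b (by simp)
    rcases hA with hA | hA <;> rcases hB with hB | hB
    · exact absurd (hA.trans hB.symm) hab
    · left; rw [hA, hB]
    · right; rw [hA, hB]
    · exact absurd (hA.trans hB.symm) hab

lemma alternate_append_dedup (w : List α) (x y : α) (hxy : x ≠ y) (hx : x ∈ w) (hy : y ∈ w) :
    Alternate (w ++ w.dedup) x y ↔ Alternate w x y := by
  have hfilt : (w ++ w.dedup).filter (P x y) = w.filter (P x y) ++ (w.filter (P x y)).dedup := by
    rw [List.filter_append, filter_dedup]
  have hxg : x ∈ w.filter (P x y) := List.mem_filter.mpr ⟨hx, by simp [P]⟩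
  have hyg : y ∈ w.filter (P x y) := List.mem_filter.mpr ⟨hy, by simp [P]⟩
  have hpair := pair_list x y hxy (w.filter (P x y)).dedup (List.nodup_dedup _)
    (List.mem_dedup.mpr hxg) (List.mem_dedup.mpr hyg)
    (fun z hz => by
      have := List.of_mem_filter (List.mem_dedup.mp hz)
      simpa [P] using this)
  have halt : Alternate (w ++ w.dedup) x y ↔
      ((w.filter (P x y) ++ (w.filter (P x y)).dedup).Chain' (· ≠ ·)) := by
    unfold Alternate
    rw [show ((w ++ w.dedup).filter (fun z => z = x ∨ z = y)) =
      (w ++ w.dedup).filter (P x y) from rfl, hfilt]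
  rw [halt]
  constructor
  · intro h
    exact (List.isChain_append.mp h).1
  · intro h
    rcases List.eq_nil_or_concat (w.filter (P x y)) with hnil | ⟨L, b, hLb⟩
    · rw [hnil] at hxg; cases hxg
    · rw [List.concat_eq_append] at hLb
      obtain ⟨u, hu⟩ := dedup_concat_suffix L b
      unfold List.Chain'; rw [List.isChain_append]
      refine ⟨h, ?_, ?_⟩
      · rcases hpair with hp | hp <;> rw [hp] <;> simp [hxy, Ne.symm hxy]
      · intro c hc d hd
        rw [hLb, List.getLast?_append_of_ne_nil _ (by simp)] at hc
        simp only [List.getLast?_singleton, Option.mem_def, Option.some.injEq] at hc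
        have hblast : ((w.filter (P x y)).dedup).getLast? = some b := by
          rw [hLb, hu, List.getLast?_append_of_ne_nil _ (by simp)]
          simp
        rcases hpair with hp | hp <;> rw [hp] at hblast hd <;>
          simp only [List.head?_cons, Option.mem_def, Option.some.injEq] at hd <;>
          simp only [List.getLast?_cons_cons, List.getLast?_singleton,
            Option.some.injEq] at hblast
        · subst hc hd hblast; exact Ne.symm hxy
        · subst hc hd hblast; exact hxy


lemma two_le_C (w u : List α) (a : α) (ha : a ∈ w) (hau : a ∈ u) :
    2 ≤ C (w ++ u) a (w ++ u).length := by
  have h : C (w ++ u) a (w ++ u).length = ((w ++ u).count a : ℤ) := by rw [C, List.take_length]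
  rw [h, List.count_append]
  have h1 := List.count_pos_iff.mpr ha
  have h2 := List.count_pos_iff.mpr hau
  push_cast
  omega

end Wheel7NWR

namespace Wheel7NWR

lemma wheel_adj_iff (x y : Option (Fin 7)) : (wheel 7).Adj x y ↔
    (x ≠ y ∧ (x = none ∨ y = none ∨ ∃ a b : Fin 7,
      x = some a ∧ y = some b ∧ ((a.val + 1) % 7 = b.val ∨ (b.val + 1) % 7 = a.val))) :=
  Iff.rfl

lemma main_lemma (w : List (Option (Fin 7))) (hmem : ∀ v, v ∈ w)
    (hrep : ∀ x y, x ≠ y → (Alternate w x y ↔ (wheel 7).Adj x y))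
    (hk : 2 ≤ C w none w.length) : False := by
  classical
  obtain ⟨ta, hta0, hta1⟩ := exists_C_step' w none 0 (by omega)
  obtain ⟨t2, ht20, ht21⟩ := exists_C_step' w none 1 (by omega)
  have hga : w[ta]? = some none := C_get_of_step w none ta (by omega)
  have hg2 : w[t2]? = some none := C_get_of_step w none t2 (by omega)
  have toAltD : ∀ x y : Option (Fin 7), x ≠ y → (wheel 7).Adj x y → AltD w x y := by
    intro x y hne hadj
    exact (alternate_iff w x y hne).mp ((hrep x y hne).mpr hadj)
  have fromAltD : ∀ x y : Option (Fin 7), x ≠ y → AltD w x y → (wheel 7).Adj x y := by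
    intro x y hne h
    exact (hrep x y hne).mp ((alternate_iff w x y hne).mpr h)
  have hAltHub : ∀ a : Fin 7, AltD w (some a) none :=
    fun a => toAltD _ _ (by simp) ((wheel_adj_iff _ _).mpr ⟨by simp, Or.inr (Or.inl rfl)⟩)
  have NB : ∀ (a : Fin 7) (p : ℕ), C w none p + C w (some a) ta - 1 ≤ C w (some a) p ∧
      C w (some a) p ≤ C w none p + C w (some a) ta := by
    intro a p
    have h1 := hAltHub a p (ta+1)
    have h3 := hAltHub a ta p
    have hxta : C w (some a) (ta+1) = C w (some a) ta :=
      C_step_of_ne w none (some a) ta hga (by simp)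
    omega
  have claim1 : ∀ a b : Fin 7, AltD w (some a) (some b) →
      (∃ p, C w (some a) p = C w none p + C w (some a) ta ∧
            C w (some b) p = C w none p + C w (some b) ta - 1) →
      (∃ q, C w (some b) q = C w none q + C w (some b) ta ∧
            C w (some a) q = C w none q + C w (some a) ta - 1) → False := by
    rintro a b hA ⟨p, hp1, hp2⟩ ⟨q, hq1, hq2⟩
    have := hA p q
    omega
  have claim2 : ∀ a b : Fin 7, (some a : Option (Fin 7)) ≠ some b →
      (∃ p, C w (some a) p = C w none p + C w (some a) ta ∧
            C w (some b) p = C w none p + C w (some b) ta - 1) ∨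
      (∃ p, C w (some b) p = C w none p + C w (some b) ta ∧
            C w (some a) p = C w none p + C w (some a) ta - 1) := by
    intro a b hne
    have hstepta : ∀ c : Fin 7, C w (some c) (ta+1) = C w (some c) ta :=
      fun c => C_step_of_ne w none (some c) ta hga (by simp)
    have haheadt2 : ∀ c : Fin 7, C w (some c) t2 = C w none t2 + C w (some c) ta := by
      intro c
      have h1 := (NB c (t2+1)).1
      have h2 := (NB c t2).2
      have h3 : C w (some c) (t2+1) = C w (some c) t2 :=
        C_step_of_ne w none (some c) t2 hg2 (by simp)
      omega
    have htat2 : ta + 1 ≤ t2 := by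
      by_contra hcon
      have := C_mono w none (by omega : t2 ≤ ta)
      omega
    have hQex : ∃ n, C w (some a) (ta+1+n) = C w none (ta+1+n) + C w (some a) ta ∨
        C w (some b) (ta+1+n) = C w none (ta+1+n) + C w (some b) ta :=
      ⟨t2 - (ta+1), by rw [show ta+1+(t2-(ta+1)) = t2 by omega]; exact Or.inl (haheadt2 a)⟩
    have hne0 : Nat.find hQex ≠ 0 := by
      intro h
      have h0 : C w (some a) (ta+1) = C w none (ta+1) + C w (some a) ta ∨
          C w (some b) (ta+1) = C w none (ta+1) + C w (some b) ta := by
        have hsp := Nat.find_spec hQex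
        rw [h] at hsp
        exact hsp
      have ha' := hstepta a
      have hb' := hstepta b
      rcases h0 with h1 | h1 <;> omega
    obtain ⟨m, hm⟩ : ∃ m, Nat.find hQex = m + 1 := ⟨Nat.find hQex - 1, by omega⟩
    have hrm : ¬(C w (some a) (ta+1+m) = C w none (ta+1+m) + C w (some a) ta ∨
        C w (some b) (ta+1+m) = C w none (ta+1+m) + C w (some b) ta) :=
      Nat.find_min hQex (by omega : m < Nat.find hQex)
    push_neg at hrm
    obtain ⟨hrma, hrmb⟩ := hrm
    have hQ2 : C w (some a) (ta+1+m+1) = C w none (ta+1+m+1) + C w (some a) ta ∨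
        C w (some b) (ta+1+m+1) = C w none (ta+1+m+1) + C w (some b) ta := by
      have hsp := Nat.find_spec hQex
      rw [hm] at hsp
      exact hsp
    have hda := NB a (ta+1+m)
    have hdb := NB b (ta+1+m)
    have hbehinda : C w (some a) (ta+1+m) = C w none (ta+1+m) + C w (some a) ta - 1 := by omega
    have hbehindb : C w (some b) (ta+1+m) = C w none (ta+1+m) + C w (some b) ta - 1 := by omega
    rcases hQ2 with hxa | hyb
    · rcases C_step w (some a) (ta+1+m) with hst | hst
      · exfalso
        have := C_mono w none (by omega : ta+1+m ≤ ta+1+m+1)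
        omega
      · have hget : w[ta+1+m]? = some (some a) := C_get_of_step w (some a) _ (by omega)
        have hnone : C w none (ta+1+m+1) = C w none (ta+1+m) :=
          C_step_of_ne w (some a) none _ hget (by simp)
        have hb2 : C w (some b) (ta+1+m+1) = C w (some b) (ta+1+m) :=
          C_step_of_ne w (some a) (some b) _ hget (Ne.symm hne)
        exact Or.inl ⟨ta+1+m+1, hxa, by omega⟩
    · rcases C_step w (some b) (ta+1+m) with hst | hst
      · exfalso
        have := C_mono w none (by omega : ta+1+m ≤ ta+1+m+1)
        omega
      · have hget : w[ta+1+m]? = some (some b) := C_get_of_step w (some b) _ (by omega)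
        have hnone : C w none (ta+1+m+1) = C w none (ta+1+m) :=
          C_step_of_ne w (some b) none _ hget (by simp)
        have ha2 : C w (some a) (ta+1+m+1) = C w (some a) (ta+1+m) :=
          C_step_of_ne w (some b) (some a) _ hget hne
        exact Or.inr ⟨ta+1+m+1, hyb, by omega⟩
  have claim3 : ∀ a b c : Fin 7, AltD w (some a) (some b) → AltD w (some b) (some c) →
      ¬ AltD w (some a) (some c) →
      (∃ p, C w (some a) p = C w none p + C w (some a) ta ∧
            C w (some b) p = C w none p + C w (some b) ta - 1) →
      (∃ p, C w (some b) p = C w none p + C w (some b) ta ∧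
            C w (some c) p = C w none p + C w (some c) ta - 1) → False := by
    rintro a b c hAab hAbc hNac hPab hPbc
    unfold AltD at hNac
    push_neg at hNac
    obtain ⟨p, q, hpq⟩ := hNac
    have h1 := NB a p
    have h2 := NB c p
    have h3 := NB a q
    have h4 := NB c q
    have hcq : C w (some c) q = C w none q + C w (some c) ta := by omega
    have haq : C w (some a) q = C w none q + C w (some a) ta - 1 := by omega
    have hbq := NB b q
    have hb' : C w (some b) q = C w none q + C w (some b) ta ∨
        C w (some b) q = C w none q + C w (some b) ta - 1 := by omega
    rcases hb' with hb | hb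
    · exact claim1 a b hAab hPab ⟨q, hb, haq⟩
    · exact claim1 b c hAbc hPbc ⟨q, hcq, hb⟩
  have hne1 : ∀ i : Fin 7, (some i : Option (Fin 7)) ≠ some (i+1) := by decide
  have hne2 : ∀ i : Fin 7, (some i : Option (Fin 7)) ≠ some (i+1+1) := by decide
  have hadj1 : ∀ i : Fin 7, (wheel 7).Adj (some i) (some (i+1)) := by
    simp only [wheel_adj_iff]; decide
  have hadj2 : ∀ i : Fin 7, ¬ (wheel 7).Adj (some i) (some (i+1+1)) := by
    simp only [wheel_adj_iff]; decide
  have hA1 : ∀ i : Fin 7, AltD w (some i) (some (i+1)) :=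
    fun i => toAltD _ _ (hne1 i) (hadj1 i)
  have hA1r : ∀ i : Fin 7, AltD w (some (i+1)) (some i) :=
    fun i => toAltD _ _ (Ne.symm (hne1 i)) ((hadj1 i).symm)
  have hN2 : ∀ i : Fin 7, ¬ AltD w (some i) (some (i+1+1)) :=
    fun i h => hadj2 i (fromAltD _ _ (hne2 i) h)
  have hN2r : ∀ i : Fin 7, ¬ AltD w (some (i+1+1)) (some i) :=
    fun i h => hadj2 i ((fromAltD _ _ (Ne.symm (hne2 i)) h).symm)
  have parity : ∀ Qf : Fin 7 → Prop, ∃ i : Fin 7,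
      (Qf i ∧ Qf (i+1)) ∨ (¬ Qf i ∧ ¬ Qf (i+1)) := by
    intro Qf
    by_contra hno
    push_neg at hno
    have e0 : (0:Fin 7)+1 = 1 := by decide
    have e1 : (1:Fin 7)+1 = 2 := by decide
    have e2 : (2:Fin 7)+1 = 3 := by decide
    have e3 : (3:Fin 7)+1 = 4 := by decide
    have e4 : (4:Fin 7)+1 = 5 := by decide
    have e5 : (5:Fin 7)+1 = 6 := by decide
    have e6 : (6:Fin 7)+1 = 0 := by decide
    have step : ∀ i : Fin 7, (Qf i → ¬ Qf (i+1)) ∧ (¬ Qf i → Qf (i+1)) := by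
      intro i
      have := hno i
      tauto
    by_cases hq : Qf 0
    · have n1 : ¬ Qf 1 := by have h := (step 0).1 hq; rwa [e0] at h
      have p2 : Qf 2 := by have h := (step 1).2 n1; rwa [e1] at h
      have n3 : ¬ Qf 3 := by have h := (step 2).1 p2; rwa [e2] at h
      have p4 : Qf 4 := by have h := (step 3).2 n3; rwa [e3] at h
      have n5 : ¬ Qf 5 := by have h := (step 4).1 p4; rwa [e4] at h
      have p6 : Qf 6 := by have h := (step 5).2 n5; rwa [e5] at h
      have n0 : ¬ Qf 0 := by have h := (step 6).1 p6; rwa [e6] at h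
      exact n0 hq
    · have p1 : Qf 1 := by have h := (step 0).2 hq; rwa [e0] at h
      have n2 : ¬ Qf 2 := by have h := (step 1).1 p1; rwa [e1] at h
      have p3 : Qf 3 := by have h := (step 2).2 n2; rwa [e2] at h
      have n4 : ¬ Qf 4 := by have h := (step 3).1 p3; rwa [e3] at h
      have p5 : Qf 5 := by have h := (step 4).2 n4; rwa [e4] at h
      have n6 : ¬ Qf 6 := by have h := (step 5).1 p5; rwa [e5] at h
      have p0 : Qf 0 := by have h := (step 6).2 n6; rwa [e6] at h
      exact hq p0
  have key := parity (fun i =>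
    ∃ p, C w (some i) p = C w none p + C w (some i) ta ∧
         C w (some (i+1)) p = C w none p + C w (some (i+1)) ta - 1)
  obtain ⟨i, hkey⟩ := key
  rcases hkey with ⟨hP1, hP2⟩ | ⟨hn1, hn2⟩
  · exact claim3 i (i+1) (i+1+1) (hA1 i) (hA1 (i+1)) (hN2 i) hP1 hP2
  · have hP1' := (claim2 i (i+1) (hne1 i)).resolve_left hn1
    have hP2' := (claim2 (i+1) (i+1+1) (hne1 (i+1))).resolve_left hn2
    exact claim3 (i+1+1) (i+1) i (hA1r (i+1)) (hA1r i) (hN2r i) hP2' hP1'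

end Wheel7NWR

/-- The wheel graph `W 7` is not word-representable. -/
theorem wheel7_not_word_representable : ¬ WordRepresentable (wheel 7) := by
  rintro ⟨w0, hmem0, hrep0⟩
  refine Wheel7NWR.main_lemma (w0 ++ w0.dedup) ?_ ?_ ?_
  · intro v
    exact List.mem_append_left _ (hmem0 v)
  · intro x y hxy
    exact (Wheel7NWR.alternate_append_dedup w0 x y hxy (hmem0 x) (hmem0 y)).trans
      (hrep0 x y hxy)
  · exact Wheel7NWR.two_le_C w0 w0.dedup none (hmem0 none)
      (List.mem_dedup.mpr (hmem0 none))
end
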